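/- arXiv:1403.6764 — 4 statements merged into one kernel-verified Lean document; each statement's English description precedes it below -/
import Mathlib

section
/- For every matrix A ∈ ℝ^{n×n} and every positive integer m, there exists a matrix B ∈ ℝ^{n_m×n_m} (denoted A_[m]) such that (exp(tA))^[m] = exp(tB) for every t ≥ 0. -/
open scoped BigOperators

noncomputable section

/-- The multi-indices `α : Fin n → ℕ` with `∑ α i = m` form a finite type. -/
instance multiIdxFintype (n m : ℕ) : Fintype {α : Fin n → ℕ // ∑ i, α i = m} :=
  Fintype.subtype (Finset.Nat.antidiagonalTuple n m) fun _ =>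
    Finset.Nat.mem_antidiagonalTuple

/-- The `m`-lift `x^[m]` of a vector `x ∈ ℝⁿ`: the entry indexed by the multi-index `α`
is `√(m!/(α₁!⋯αₙ!)) · x₁^{α₁} ⋯ xₙ^{αₙ}`. -/
def mLift (n m : ℕ) (x : Fin n → ℝ) : {α : Fin n → ℕ // ∑ i, α i = m} → ℝ :=
  fun α => Real.sqrt (Nat.multinomial Finset.univ α.1) * ∏ i, x i ^ α.1 i

/-- `L` is the `m`-lift `A^[m]` of the matrix `A`, i.e. `(Ax)^[m] = L x^[m]` for all `x`. -/
def IsMatrixLift (n m : ℕ) (A : Matrix (Fin n) (Fin n) ℝ)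
    (L : Matrix {α : Fin n → ℕ // ∑ i, α i = m} {α : Fin n → ℕ // ∑ i, α i = m} ℝ) : Prop :=
  ∀ x : Fin n → ℝ, mLift n m (A.mulVec x) = L.mulVec (mLift n m x)

/-- The Euclidean norm of a vector in `ℝⁿ`. -/
def euclNorm {n : ℕ} (x : Fin n → ℝ) : ℝ := Real.sqrt (∑ i, x i ^ 2)

/-- The spectral radius of a real square matrix: the supremum of the absolute values of its
complex eigenvalues. -/
def specRad {N : Type*} [Fintype N] [DecidableEq N] (M : Matrix N N ℝ) : ENNReal :=
  spectralRadius ℂ (M.map (algebraMap ℝ ℂ))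

end

noncomputable section LiftAux

open Finset NormedSpace

/-- Shift a multi-index: subtract `1` at position `i`, add `1` at position `k`. -/
def mvIdx (n : ℕ) (a : Fin n → ℕ) (i k : Fin n) : Fin n → ℕ :=
  fun j => a j - (if j = i then 1 else 0) + (if j = k then 1 else 0)

/-- The candidate lift `A_[m]` of the infinitesimal generator. -/
def liftD (n m : ℕ) (A : Matrix (Fin n) (Fin n) ℝ) :
    Matrix {α : Fin n → ℕ // ∑ i, α i = m} {α : Fin n → ℕ // ∑ i, α i = m} ℝ :=
  fun α β => ∑ i, ∑ k, (α.1 i : ℝ) * A i k *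
    (if β.1 = mvIdx n α.1 i k then
      Real.sqrt (Nat.multinomial Finset.univ α.1) / Real.sqrt (Nat.multinomial Finset.univ β.1)
    else 0)

theorem mvIdx_sum {n m : ℕ} {a : Fin n → ℕ} (ha : ∑ j, a j = m) {i : Fin n} (hi : 1 ≤ a i)
    (k : Fin n) : ∑ j, mvIdx n a i k j = m := by
  have h1 : ∑ j, mvIdx n a i k j =
      (∑ j, (a j - if j = i then 1 else 0)) + ∑ j : Fin n, (if j = k then 1 else 0) := by
    rw [← Finset.sum_add_distrib]; rfl
  have h2 : ∑ j : Fin n, (if j = k then 1 else 0) = 1 := by simp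
  have h3 : (∑ j, (a j - if j = i then 1 else 0)) =
      (a i - 1) + ∑ j ∈ univ.erase i, a j := by
    rw [← Finset.add_sum_erase _ _ (mem_univ i)]
    simp only [if_pos rfl]
    congr 1
    exact Finset.sum_congr rfl fun j hj => by simp [Finset.ne_of_mem_erase hj]
  have h4 : a i + ∑ j ∈ univ.erase i, a j = m := by
    rw [Finset.add_sum_erase _ _ (mem_univ i)]; exact ha
  omega

theorem prod_mvIdx {n : ℕ} (y : Fin n → ℝ) (a : Fin n → ℕ) (i k : Fin n) :
    ∏ j, y j ^ mvIdx n a i k j =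
      y k * (y i ^ (a i - 1) * ∏ j ∈ univ.erase i, y j ^ a j) := by
  have h1 : ∏ j, y j ^ mvIdx n a i k j =
      (∏ j, y j ^ (a j - if j = i then 1 else 0)) * ∏ j : Fin n, y j ^ (if j = k then 1 else 0) := by
    rw [← Finset.prod_mul_distrib]
    exact Finset.prod_congr rfl fun j _ => (pow_add _ _ _)
  have h2 : ∏ j : Fin n, y j ^ (if j = k then 1 else 0) = y k := by
    rw [Finset.prod_congr rfl (g := fun j => if j = k then y j else 1)
      (fun j _ => by by_cases h : j = k <;> simp [h])]
    simp
  have h3 : (∏ j, y j ^ (a j - if j = i then 1 else 0)) =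
      y i ^ (a i - 1) * ∏ j ∈ univ.erase i, y j ^ a j := by
    rw [← Finset.mul_prod_erase _ _ (mem_univ i), if_pos rfl]
    congr 1
    exact Finset.prod_congr rfl fun j hj => by simp [Finset.ne_of_mem_erase hj]
  rw [h1, h2, h3]; ring

/-- The key algebraic identity: applying `liftD` to a lifted vector gives the "derivation"
formula for the derivative of the lifted flow. -/
theorem liftD_mulVec (n m : ℕ) (A : Matrix (Fin n) (Fin n) ℝ) (y : Fin n → ℝ)
    (α : {α : Fin n → ℕ // ∑ i, α i = m}) :
    ((liftD n m A).mulVec (mLift n m y)) α =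
      Real.sqrt (Nat.multinomial Finset.univ α.1) *
        ∑ i, (∏ j ∈ univ.erase i, y j ^ α.1 j) •
          ((α.1 i : ℝ) * y i ^ (α.1 i - 1) * (A.mulVec y) i) := by
  classical
  have key : ∀ i k : Fin n,
      (∑ β : {α : Fin n → ℕ // ∑ i, α i = m},
        (α.1 i : ℝ) * A i k *
          (if β.1 = mvIdx n α.1 i k then
            Real.sqrt (Nat.multinomial Finset.univ α.1) /
              Real.sqrt (Nat.multinomial Finset.univ β.1)
          else 0) * mLift n m y β) =
      (α.1 i : ℝ) * A i k * Real.sqrt (Nat.multinomial Finset.univ α.1) *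
        (y k * (y i ^ (α.1 i - 1) * ∏ j ∈ univ.erase i, y j ^ α.1 j)) := by
    intro i k
    rcases Nat.eq_zero_or_pos (α.1 i) with h0 | h1
    · simp [h0]
    · set β₀ : {α : Fin n → ℕ // ∑ i, α i = m} := ⟨mvIdx n α.1 i k, mvIdx_sum α.2 h1 k⟩ with hβ₀
      rw [Finset.sum_eq_single β₀]
      · rw [if_pos rfl]
        have hpos : (0 : ℝ) < Real.sqrt (Nat.multinomial Finset.univ β₀.1) :=
          Real.sqrt_pos.2 (by exact_mod_cast Nat.multinomial_pos _ _)
        rw [mLift, ← prod_mvIdx y α.1 i k]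
        field_simp
        ring
      · intro β _ hβ
        rw [if_neg (fun h => hβ (Subtype.ext h)), mul_zero, zero_mul]
      · intro h; exact absurd (mem_univ β₀) h
  have expand : ((liftD n m A).mulVec (mLift n m y)) α =
      ∑ i, ∑ k, (α.1 i : ℝ) * A i k * Real.sqrt (Nat.multinomial Finset.univ α.1) *
        (y k * (y i ^ (α.1 i - 1) * ∏ j ∈ univ.erase i, y j ^ α.1 j)) := by
    rw [Matrix.mulVec, show ∀ v w, dotProduct v w = ∑ β, v β * w β from fun _ _ => rfl]
    simp only [liftD, Finset.sum_mul]
    rw [Finset.sum_comm]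
    refine Finset.sum_congr rfl fun i _ => ?_
    rw [Finset.sum_comm]
    refine Finset.sum_congr rfl fun k _ => ?_
    exact key i k
  rw [expand, Finset.mul_sum]
  refine Finset.sum_congr rfl fun i _ => ?_
  rw [Matrix.mulVec, show ∀ v w, dotProduct v w = ∑ β, v β * w β from fun _ _ => rfl,
    smul_eq_mul]
  rw [Finset.mul_sum, Finset.mul_sum, Finset.mul_sum]
  refine Finset.sum_congr rfl fun k _ => ?_
  ring

theorem hasDerivAt_exp_applyLM {ι : Type*} [Fintype ι] [DecidableEq ι]
    (M : Matrix ι ι ℝ) (L : Matrix ι ι ℝ →ₗ[ℝ] ℝ) (t : ℝ) :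
    HasDerivAt (fun u : ℝ => L (exp (u • M))) (L (exp (t • M) * M)) t := by
  letI : SeminormedRing (Matrix ι ι ℝ) := Matrix.linftyOpSemiNormedRing
  letI : NormedRing (Matrix ι ι ℝ) := Matrix.linftyOpNormedRing
  letI : NormedAlgebra ℝ (Matrix ι ι ℝ) := Matrix.linftyOpNormedAlgebra
  have h := hasDerivAt_exp_smul_const (𝕂 := ℝ) M t
  exact (LinearMap.toContinuousLinearMap L).hasFDerivAt.comp_hasDerivAt t h

/-- Applying `mulVec` at a coordinate, as a linear map in the matrix. -/
def mulVecApplyLM {ι : Type*} [Fintype ι] [DecidableEq ι] (x : ι → ℝ) (j : ι) :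
    Matrix ι ι ℝ →ₗ[ℝ] ℝ where
  toFun M := M.mulVec x j
  map_add' _ _ := by simp [Matrix.add_mulVec]
  map_smul' _ _ := by simp [Matrix.smul_mulVec]

/-- The matrix entry, as a linear map. -/
def entryLM {ι : Type*} [Fintype ι] [DecidableEq ι] (a b : ι) :
    Matrix ι ι ℝ →ₗ[ℝ] ℝ where
  toFun M := M a b
  map_add' _ _ := rfl
  map_smul' _ _ := rfl

theorem hasDerivAt_exp_mulVec {ι : Type*} [Fintype ι] [DecidableEq ι]
    (M : Matrix ι ι ℝ) (x : ι → ℝ) (j : ι) (t : ℝ) :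
    HasDerivAt (fun u : ℝ => (exp (u • M)).mulVec x j)
      (M.mulVec ((exp (t • M)).mulVec x) j) t := by
  have h := hasDerivAt_exp_applyLM M (mulVecApplyLM x j) t
  have hc : Commute M (exp (t • M)) := ((Commute.refl M).smul_right t).exp_right
  have e : (exp (t • M) * M).mulVec x j = M.mulVec ((exp (t • M)).mulVec x) j := by
    rw [← hc.eq, ← Matrix.mulVec_mulVec]
  rw [mulVecApplyLM] at h
  simp only [LinearMap.coe_mk, AddHom.coe_mk] at h
  rwa [e] at h

theorem hasDerivAt_exp_entry {ι : Type*} [Fintype ι] [DecidableEq ι]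
    (M : Matrix ι ι ℝ) (a b : ι) (t : ℝ) :
    HasDerivAt (fun u : ℝ => exp (u • M) a b) ((exp (t • M) * M) a b) t := by
  have h := hasDerivAt_exp_applyLM M (entryLM a b) t
  rw [entryLM] at h
  exact h

/-- Derivative of a coordinate of the lifted flow. -/
theorem hasDerivAt_mLift_flow (n m : ℕ) (A : Matrix (Fin n) (Fin n) ℝ) (x : Fin n → ℝ)
    (β : {α : Fin n → ℕ // ∑ i, α i = m}) (u : ℝ) :
    HasDerivAt (fun u : ℝ => mLift n m ((exp (u • A)).mulVec x) β)
      (((liftD n m A).mulVec (mLift n m ((exp (u • A)).mulVec x))) β) u := by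
  classical
  set y : ℝ → Fin n → ℝ := fun u => (exp (u • A)).mulVec x with hy
  have hstep : ∀ j : Fin n,
      HasDerivAt (fun u : ℝ => y u j ^ β.1 j)
        ((β.1 j : ℝ) * y u j ^ (β.1 j - 1) * A.mulVec (y u) j) u :=
    fun j => (hasDerivAt_exp_mulVec A x j u).pow _
  have hprod : HasDerivAt (fun u : ℝ => ∏ j, y u j ^ β.1 j)
      (∑ i, (∏ j ∈ Finset.univ.erase i, y u j ^ β.1 j) •
        ((β.1 i : ℝ) * y u i ^ (β.1 i - 1) * A.mulVec (y u) i)) u :=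
    HasDerivAt.fun_finset_prod fun i _ => hstep i
  have h := hprod.const_mul (Real.sqrt (Nat.multinomial Finset.univ β.1))
  rw [liftD_mulVec n m A (y u) β]
  exact h

end LiftAux

/-- For every `A ∈ ℝ^{n×n}` and every positive integer `m`, there exists a
matrix `B ∈ ℝ^{n_m × n_m}` (denoted `A_[m]`) such that `(exp(tA))^[m] = exp(tB)` for every
`t ≥ 0`. -/
theorem exists_matrixLift_exp (n m : ℕ) (hm : 0 < m) (A : Matrix (Fin n) (Fin n) ℝ) :
    ∃ B : Matrix {α : Fin n → ℕ // ∑ i, α i = m} {α : Fin n → ℕ // ∑ i, α i = m} ℝ,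
      ∀ t : ℝ, 0 ≤ t →
        IsMatrixLift n m (NormedSpace.exp (t • A)) (NormedSpace.exp (t • B)) := by
  classical
  open NormedSpace in
  refine ⟨liftD n m A, fun t _ x => ?_⟩
  set B := liftD n m A with hB
  set g : ℝ → {α : Fin n → ℕ // ∑ i, α i = m} → ℝ :=
    fun u => mLift n m ((exp (u • A)).mulVec x) with hg
  -- each coordinate of `u ↦ exp (u • (-B)) *ᵥ g u` has derivative zero
  have hF : ∀ (α : {α : Fin n → ℕ // ∑ i, α i = m}) (u : ℝ),
      HasDerivAt (fun u : ℝ => ((exp (u • (-B))).mulVec (g u)) α) 0 u := by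
    intro α u
    have hterm : ∀ β : {α : Fin n → ℕ // ∑ i, α i = m},
        HasDerivAt (fun u : ℝ => exp (u • (-B)) α β * g u β)
          ((exp (u • (-B)) * (-B)) α β * g u β +
            exp (u • (-B)) α β * (B.mulVec (g u)) β) u :=
      fun β => (hasDerivAt_exp_entry (-B) α β u).mul (hasDerivAt_mLift_flow n m A x β u)
    have hsum := HasDerivAt.fun_sum (u := Finset.univ) fun β _ => hterm β
    have hzero : (∑ β : {α : Fin n → ℕ // ∑ i, α i = m},
        ((exp (u • (-B)) * (-B)) α β * g u β +
          exp (u • (-B)) α β * (B.mulVec (g u)) β)) = 0 := by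
      rw [Finset.sum_add_distrib]
      have assoc : ∑ β, (exp (u • (-B)) * B) α β * g u β =
          ∑ β, exp (u • (-B)) α β * (B.mulVec (g u)) β := by
        have := congrFun (Matrix.mulVec_mulVec (g u) (exp (u • (-B))) B) α
        simpa [Matrix.mulVec, dotProduct] using this.symm
      simp only [Matrix.mul_neg, Matrix.neg_apply, neg_mul, Finset.sum_neg_distrib]
      rw [assoc]
      ring
    have : HasDerivAt (fun u : ℝ => ∑ β : {α : Fin n → ℕ // ∑ i, α i = m},
        exp (u • (-B)) α β * g u β) 0 u := hzero ▸ hsum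
    simpa [Matrix.mulVec, dotProduct] using this
  -- hence it is constant
  have hconst : ∀ α : {α : Fin n → ℕ // ∑ i, α i = m},
      ((exp (t • (-B))).mulVec (g t)) α = ((exp ((0:ℝ) • (-B))).mulVec (g 0)) α := by
    intro α
    exact is_const_of_deriv_eq_zero (fun u => (hF α u).differentiableAt)
      (fun u => (hF α u).deriv) t 0
  have hG0 : (exp ((0:ℝ) • (-B))).mulVec (g 0) = mLift n m x := by
    rw [hg]
    simp [NormedSpace.exp_zero, Matrix.one_mulVec]
  have hFt : (exp (t • (-B))).mulVec (g t) = mLift n m x := by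
    funext α
    rw [hconst α, hG0]
  -- invertibility relation
  have hcomm : Commute (t • B) (t • (-B)) :=
    (((Commute.refl B).neg_right).smul_left t).smul_right t
  have hinv : exp (t • B) * exp (t • (-B)) = 1 := by
    rw [← Matrix.exp_add_of_commute _ _ hcomm]
    have : t • B + t • (-B) = 0 := by simp
    rw [this, NormedSpace.exp_zero]
  show g t = (exp (t • B)).mulVec (mLift n m x)
  calc g t = (exp (t • B) * exp (t • (-B))).mulVec (g t) := by
        rw [hinv, Matrix.one_mulVec]
    _ = (exp (t • B)).mulVec ((exp (t • (-B))).mulVec (g t)) := by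
        rw [Matrix.mulVec_mulVec]
    _ = (exp (t • B)).mulVec (mLift n m x) := by rw [hFt]
end

section
/- For every matrix A ∈ ℝ^{n×n} and every positive integer m, the spectral radius of the m-lift A^[m] equals the m-th power of the spectral radius of A: ρ(A^[m]) = ρ(A)^m. -/
open scoped BigOperators

/-! ### Auxiliary material -/

open Filter Matrix
open scoped Matrix.Norms.L2Operator ENNReal NNReal Topology

noncomputable section Aux

/-- The identification of a plain vector with a point of Euclidean space. -/
def EV {κ : Type*} [Fintype κ] (v : κ → ℝ) : EuclideanSpace ℝ κ := (WithLp.equiv 2 _).symm v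

/-- `EV` as a linear equivalence. -/
def EVL (κ : Type*) [Fintype κ] : (κ → ℝ) ≃ₗ[ℝ] EuclideanSpace ℝ κ :=
  (WithLp.linearEquiv 2 ℝ (κ → ℝ)).symm

theorem EV_eq_EVL {κ : Type*} [Fintype κ] (v : κ → ℝ) : EV v = EVL κ v := rfl

def EVC {κ : Type*} [Fintype κ] (v : κ → ℂ) : EuclideanSpace ℂ κ := (WithLp.equiv 2 _).symm v

theorem norm_EV {κ : Type*} [Fintype κ] (v : κ → ℝ) : ‖EV v‖ = Real.sqrt (∑ i, v i ^ 2) := by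
  rw [EuclideanSpace.norm_eq]
  congr 1
  exact Finset.sum_congr rfl fun i _ => by simp [EV, sq_abs]

theorem abs_coord_le_norm_EV {κ : Type*} [Fintype κ] (v : κ → ℝ) (β : κ) : |v β| ≤ ‖EV v‖ := by
  rw [norm_EV, ← Real.sqrt_sq_eq_abs]
  exact Real.sqrt_le_sqrt (Finset.single_le_sum (f := fun i => v i ^ 2)
    (fun i _ => sq_nonneg _) (Finset.mem_univ β))

theorem sumSq_mLift (n m : ℕ) (x : Fin n → ℝ) :
    ∑ α : {α : Fin n → ℕ // ∑ i, α i = m}, (mLift n m x α)^2 = (∑ i, x i ^ 2) ^ m := by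
  rw [Finset.sum_pow_eq_sum_piAntidiag]
  rw [Finset.sum_subtype (Finset.piAntidiag Finset.univ m)
    (p := fun α : Fin n → ℕ => ∑ i, α i = m) (by simp [Finset.mem_piAntidiag])
    (fun k : Fin n → ℕ => (Nat.multinomial Finset.univ k : ℝ) * ∏ i, (x i ^ 2) ^ k i)]
  refine Finset.sum_congr rfl fun α _ => ?_
  simp only [mLift, mul_pow]
  rw [Real.sq_sqrt (by positivity), ← Finset.prod_pow]
  exact congrArg _ (Finset.prod_congr rfl fun i _ => (pow_right_comm _ _ _))

theorem norm_EV_mLift (n m : ℕ) (x : Fin n → ℝ) : ‖EV (mLift n m x)‖ = ‖EV x‖ ^ m := by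
  rw [norm_EV, norm_EV, sumSq_mLift]
  rw [show (∑ i, x i ^ 2) ^ m = (Real.sqrt (∑ i, x i ^ 2) ^ m) ^ 2 by
    rw [← pow_mul, mul_comm m 2, pow_mul, Real.sq_sqrt (by positivity)]]
  exact Real.sqrt_sq (by positivity)

section OpNorm

variable {ι : Type*} [Fintype ι] [DecidableEq ι]

theorem opNorm_le {M : Matrix ι ι ℝ} {c : ℝ} (hc : 0 ≤ c)
    (h : ∀ x : ι → ℝ, ‖EV (M *ᵥ x)‖ ≤ c * ‖EV x‖) : ‖M‖ ≤ c := by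
  rw [Matrix.l2_opNorm_def]
  refine ContinuousLinearMap.opNorm_le_bound _ hc fun y => ?_
  simpa [EV, Matrix.toEuclideanLin_apply] using h (WithLp.equiv 2 _ y)

theorem opNormC_le {M : Matrix ι ι ℂ} {c : ℝ} (hc : 0 ≤ c)
    (h : ∀ x : ι → ℂ, ‖EVC (M *ᵥ x)‖ ≤ c * ‖EVC x‖) : ‖M‖ ≤ c := by
  rw [Matrix.l2_opNorm_def]
  refine ContinuousLinearMap.opNorm_le_bound _ hc fun y => ?_
  simpa [EVC, Matrix.toEuclideanLin_apply] using h (WithLp.equiv 2 _ y)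

theorem norm_EVC_ofReal {κ : Type*} [Fintype κ] (v : κ → ℝ) :
    ‖EVC (fun i => (v i : ℂ))‖ = ‖EV v‖ := by
  rw [EuclideanSpace.norm_eq, EuclideanSpace.norm_eq]
  congr 1
  exact Finset.sum_congr rfl fun i _ => by simp [EV, EVC]

theorem real_le_complex_opNorm (M : Matrix ι ι ℝ) :
    ‖M‖ ≤ ‖M.map (algebraMap ℝ ℂ)‖ := by
  refine opNorm_le (norm_nonneg _) fun x => ?_
  have h2 : (M.map (algebraMap ℝ ℂ)) *ᵥ (fun i => (x i : ℂ)) = fun i => ((M *ᵥ x) i : ℂ) := by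
    funext i
    exact (RingHom.map_mulVec (algebraMap ℝ ℂ) M x i).symm
  calc ‖EV (M *ᵥ x)‖ = ‖EVC ((M.map (algebraMap ℝ ℂ)) *ᵥ (fun i => (x i : ℂ)))‖ := by
        rw [h2]; exact (norm_EVC_ofReal _).symm
    _ ≤ ‖M.map (algebraMap ℝ ℂ)‖ * ‖EVC (fun i => (x i : ℂ))‖ :=
        by have := (M.map (algebraMap ℝ ℂ)).l2_opNorm_mulVec (EVC (fun i => (x i : ℂ))); exact this
    _ = ‖M.map (algebraMap ℝ ℂ)‖ * ‖EV x‖ := by rw [norm_EVC_ofReal]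

theorem norm_re_le_normC {κ : Type*} [Fintype κ] (z : κ → ℂ) :
    ‖EV (fun i => (z i).re)‖ ≤ ‖EVC z‖ := by
  rw [EuclideanSpace.norm_eq, EuclideanSpace.norm_eq]
  apply Real.sqrt_le_sqrt
  refine Finset.sum_le_sum fun i _ => ?_
  have : ‖(EVC z) i‖^2 = (z i).re^2 + (z i).im^2 := by
    simp only [EVC]
    rw [Complex.sq_norm, Complex.normSq_apply]; simp [sq]
  rw [this]
  simp [EV]
  nlinarith [sq_nonneg (z i).im]

theorem norm_im_le_normC {κ : Type*} [Fintype κ] (z : κ → ℂ) :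
    ‖EV (fun i => (z i).im)‖ ≤ ‖EVC z‖ := by
  rw [EuclideanSpace.norm_eq, EuclideanSpace.norm_eq]
  apply Real.sqrt_le_sqrt
  refine Finset.sum_le_sum fun i _ => ?_
  have : ‖(EVC z) i‖^2 = (z i).re^2 + (z i).im^2 := by
    simp only [EVC]
    rw [Complex.sq_norm, Complex.normSq_apply]; simp [sq]
  rw [this]
  simp [EV]
  nlinarith [sq_nonneg (z i).re]

theorem complex_le_two_real_opNorm (M : Matrix ι ι ℝ) :
    ‖M.map (algebraMap ℝ ℂ)‖ ≤ 2 * ‖M‖ := by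
  refine opNormC_le (by positivity) fun z => ?_
  set Mc := M.map (algebraMap ℝ ℂ)
  have hz : z = (fun i => ((z i).re : ℂ)) + Complex.I • (fun i => ((z i).im : ℂ)) := by
    funext i
    simp [Pi.add_apply, Pi.smul_apply, smul_eq_mul]
    rw [mul_comm]
    exact (Complex.re_add_im (z i)).symm
  have hre : ∀ v : ι → ℝ, Mc *ᵥ (fun i => (v i : ℂ)) = fun i => (((M *ᵥ v) i : ℝ) : ℂ) := by
    intro v; funext i; exact (RingHom.map_mulVec (algebraMap ℝ ℂ) M v i).symm
  calc ‖EVC (Mc *ᵥ z)‖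
      = ‖EVC (Mc *ᵥ ((fun i => ((z i).re : ℂ)) + Complex.I • (fun i => ((z i).im : ℂ))))‖ := by
        rw [← hz]
    _ = ‖EVC (Mc *ᵥ (fun i => ((z i).re : ℂ))) + Complex.I • EVC (Mc *ᵥ (fun i => ((z i).im : ℂ)))‖ := by
        rw [Matrix.mulVec_add, Matrix.mulVec_smul]; rfl
    _ ≤ ‖EVC (Mc *ᵥ (fun i => ((z i).re : ℂ)))‖ + ‖Complex.I • EVC (Mc *ᵥ (fun i => ((z i).im : ℂ)))‖ :=
        norm_add_le _ _
    _ = ‖EVC (Mc *ᵥ (fun i => ((z i).re : ℂ)))‖ + ‖EVC (Mc *ᵥ (fun i => ((z i).im : ℂ)))‖ := by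
        rw [norm_smul, Complex.norm_I, one_mul]
    _ = ‖EV (M *ᵥ fun i => (z i).re)‖ + ‖EV (M *ᵥ fun i => (z i).im)‖ := by
        rw [hre, hre, norm_EVC_ofReal, norm_EVC_ofReal]
    _ ≤ ‖M‖ * ‖EV (fun i => (z i).re)‖ + ‖M‖ * ‖EV (fun i => (z i).im)‖ :=
        add_le_add (by have := M.l2_opNorm_mulVec (EV (fun i => (z i).re)); exact this)
            (by have := M.l2_opNorm_mulVec (EV (fun i => (z i).im)); exact this)
    _ ≤ ‖M‖ * ‖EVC z‖ + ‖M‖ * ‖EVC z‖ := by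
        have hM : (0:ℝ) ≤ ‖M‖ := norm_nonneg _
        exact add_le_add (by nlinarith [norm_re_le_normC z]) (by nlinarith [norm_im_le_normC z])
    _ = 2 * ‖M‖ * ‖EVC z‖ := by ring

end OpNorm

/-- The lifted vectors span the whole space. -/
theorem span_mLift (n m : ℕ) :
    Submodule.span ℝ (Set.range (fun x : Fin n → ℝ => EV (mLift n m x))) = ⊤ := by
  rw [← Submodule.orthogonal_eq_bot_iff]
  rw [Submodule.eq_bot_iff]
  intro v hv
  have hzero : ∀ x : Fin n → ℝ, ∑ β : {α : Fin n → ℕ // ∑ i, α i = m},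
      mLift n m x β * v β = 0 := by
    intro x
    have := (Submodule.mem_orthogonal _ v).mp hv (EV (mLift n m x))
      (Submodule.subset_span (Set.mem_range_self x))
    rw [PiLp.inner_apply] at this
    simpa [EV, RCLike.inner_apply, mul_comm] using this
  set P : MvPolynomial (Fin n) ℝ :=
    ∑ β : {α : Fin n → ℕ // ∑ i, α i = m},
      MvPolynomial.monomial (Finsupp.equivFunOnFinite.symm β.1)
        (Real.sqrt (Nat.multinomial Finset.univ β.1) * v β) with hP
  have heval : ∀ x : Fin n → ℝ, MvPolynomial.eval x P = 0 := by
    intro x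
    rw [hP, map_sum]
    rw [← hzero x]
    refine Finset.sum_congr rfl fun β _ => ?_
    rw [MvPolynomial.eval_monomial, mLift]
    rw [Finsupp.prod_pow]
    simp [mul_assoc, mul_comm (v β) _]
  have hP0 : P = 0 := MvPolynomial.funext (fun x => by rw [heval x]; simp)
  have hcoeff : ∀ β : {α : Fin n → ℕ // ∑ i, α i = m},
      Real.sqrt (Nat.multinomial Finset.univ β.1) * v β = 0 := by
    intro β₀
    have := congrArg (MvPolynomial.coeff (Finsupp.equivFunOnFinite.symm β₀.1)) hP0
    rw [hP, MvPolynomial.coeff_sum] at this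
    simp only [MvPolynomial.coeff_monomial, MvPolynomial.coeff_zero] at this
    rwa [Finset.sum_eq_single β₀ (fun β _ hβ => by
        rw [if_neg]
        exact fun h => hβ (Subtype.ext (Finsupp.equivFunOnFinite.symm.injective h))
      ) (fun h => absurd (Finset.mem_univ _) h), if_pos rfl] at this
  ext β
  have h := hcoeff β
  have hs : Real.sqrt (Nat.multinomial Finset.univ β.1) ≠ 0 := by
    rw [Real.sqrt_ne_zero']
    exact_mod_cast Nat.multinomial_pos _ _
  simpa [hs] using (mul_eq_zero.mp h).resolve_left hs

/-- Iterated lift identity. -/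
theorem mLift_pow {n m : ℕ} {A : Matrix (Fin n) (Fin n) ℝ}
    {L : Matrix {α : Fin n → ℕ // ∑ i, α i = m} {α : Fin n → ℕ // ∑ i, α i = m} ℝ}
    (hL : IsMatrixLift n m A L) (k : ℕ) (x : Fin n → ℝ) :
    mLift n m ((A ^ k) *ᵥ x) = (L ^ k) *ᵥ mLift n m x := by
  induction k with
  | zero => simp [Matrix.one_mulVec]
  | succ k ih =>
      rw [pow_succ', pow_succ', ← Matrix.mulVec_mulVec, ← Matrix.mulVec_mulVec, hL, ih]

section Limits

theorem tendsto_crpow {c : ℝ≥0} (hc : c ≠ 0) :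
    Tendsto (fun k : ℕ => (c : ℝ≥0∞) ^ (1 / (k:ℝ))) atTop (𝓝 1) := by
  have h0 : Tendsto (fun k : ℕ => 1 / (k:ℝ)) atTop (𝓝 0) :=
    tendsto_one_div_atTop_nhds_zero_nat
  have h2 : Tendsto (fun k : ℕ => c ^ (1/(k:ℝ))) atTop (𝓝 (c ^ (0:ℝ))) :=
    Filter.Tendsto.nnrpow tendsto_const_nhds h0 (Or.inl hc)
  rw [NNReal.rpow_zero] at h2
  have := ENNReal.tendsto_coe.mpr h2
  rw [ENNReal.coe_one] at this
  refine this.congr fun k => ?_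
  exact ENNReal.coe_rpow_of_ne_zero hc _

theorem le_squeeze {u v : ℕ → ℝ≥0} {c : ℝ≥0} (hc : c ≠ 0) {ρ₁ ρ₂ : ℝ≥0∞}
    (hu : Tendsto (fun k => ((u k : ℝ≥0∞)) ^ (1/(k:ℝ))) atTop (𝓝 ρ₁))
    (hv : Tendsto (fun k => ((v k : ℝ≥0∞)) ^ (1/(k:ℝ))) atTop (𝓝 ρ₂))
    (hle : ∀ k, u k ≤ c * v k) : ρ₁ ≤ ρ₂ := by
  have hmul : Tendsto (fun (k:ℕ) => ((c:ℝ≥0∞) ^ (1/(k:ℝ))) * ((v k : ℝ≥0∞)) ^ (1/(k:ℝ)))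
      atTop (𝓝 (1 * ρ₂)) :=
    ENNReal.Tendsto.mul (tendsto_crpow hc) (Or.inl one_ne_zero) hv (Or.inr ENNReal.one_ne_top)
  rw [one_mul] at hmul
  refine le_of_tendsto_of_tendsto' hu hmul fun k => ?_
  calc ((u k : ℝ≥0∞)) ^ (1/(k:ℝ)) ≤ ((c * v k : ℝ≥0) : ℝ≥0∞) ^ (1/(k:ℝ)) :=
        ENNReal.rpow_le_rpow (by exact_mod_cast hle k) (by positivity)
    _ = ((c:ℝ≥0∞) ^ (1/(k:ℝ))) * ((v k : ℝ≥0∞)) ^ (1/(k:ℝ)) := by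
        rw [ENNReal.coe_mul, ENNReal.mul_rpow_of_nonneg _ _ (by positivity)]

end Limits

abbrev MIdx (n m : ℕ) := {α : Fin n → ℕ // ∑ i, α i = m}

end Aux

/-- For every `A ∈ ℝ^{n×n}` and every positive integer `m`, the spectral
radius of the `m`-lift `A^[m]` equals the `m`-th power of the spectral radius of `A`:
`ρ(A^[m]) = ρ(A)^m`. -/
theorem specRad_matrixLift (n m : ℕ) (hm : 0 < m) (A : Matrix (Fin n) (Fin n) ℝ)
    (L : Matrix {α : Fin n → ℕ // ∑ i, α i = m} {α : Fin n → ℕ // ∑ i, α i = m} ℝ)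
    (hL : IsMatrixLift n m A L) :
    specRad L = specRad A ^ m := by
  classical
  let ι := MIdx n m
  set Ac : Matrix (Fin n) (Fin n) ℂ := A.map (algebraMap ℝ ℂ) with hAc
  set Lc : Matrix ι ι ℂ := L.map (algebraMap ℝ ℂ) with hLc
  -- complexified powers are maps of real powers
  have hpowA : ∀ k : ℕ, Ac ^ k = (A ^ k).map (algebraMap ℝ ℂ) := by
    intro k
    rw [hAc, ← RingHom.mapMatrix_apply, ← RingHom.mapMatrix_apply, ← map_pow]
  have hpowL : ∀ k : ℕ, Lc ^ k = (L ^ k).map (algebraMap ℝ ℂ) := by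
    intro k
    rw [hLc, ← RingHom.mapMatrix_apply, ← RingHom.mapMatrix_apply, ← map_pow]
  -- Gelfand's formula for both matrices
  have hGL : Tendsto (fun k : ℕ => (‖Lc ^ k‖₊ : ℝ≥0∞) ^ (1 / (k:ℝ))) atTop
      (𝓝 (specRad L)) := by
    have := spectrum.pow_nnnorm_pow_one_div_tendsto_nhds_spectralRadius Lc
    exact this.congr fun k => by norm_num
  have hGA : Tendsto (fun k : ℕ => (‖Ac ^ k‖₊ : ℝ≥0∞) ^ (1 / (k:ℝ))) atTop
      (𝓝 (specRad A)) := by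
    have := spectrum.pow_nnnorm_pow_one_div_tendsto_nhds_spectralRadius Ac
    exact this.congr fun k => by norm_num
  -- the m-th power version for A
  have hGAm : Tendsto (fun k : ℕ => ((‖Ac ^ k‖₊ ^ m : ℝ≥0) : ℝ≥0∞) ^ (1 / (k:ℝ))) atTop
      (𝓝 (specRad A ^ m)) := by
    have hcont := (ENNReal.continuous_pow m).tendsto (specRad A)
    have := hcont.comp hGA
    refine this.congr fun k => ?_
    simp only [Function.comp]
    rw [ENNReal.coe_pow, ← ENNReal.rpow_natCast ((‖Ac ^ k‖₊ : ℝ≥0∞)) m, ← ENNReal.rpow_mul,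
      ← ENNReal.rpow_natCast ((‖Ac ^ k‖₊ : ℝ≥0∞) ^ (1/(k:ℝ))) m, ← ENNReal.rpow_mul,
      mul_comm]
  -- the lower bound F1 : ‖A^k‖^m ≤ ‖L^k‖
  have hF1 : ∀ k : ℕ, ‖A ^ k‖ ^ m ≤ ‖L ^ k‖ := by
    intro k
    have hkey : ∀ x : Fin n → ℝ, ‖EV ((A ^ k) *ᵥ x)‖ ^ m ≤ ‖L ^ k‖ * ‖EV x‖ ^ m := by
      intro x
      calc ‖EV ((A ^ k) *ᵥ x)‖ ^ m = ‖EV (mLift n m ((A ^ k) *ᵥ x))‖ := by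
            rw [norm_EV_mLift]
        _ = ‖EV ((L ^ k) *ᵥ mLift n m x)‖ := by rw [mLift_pow hL]
        _ ≤ ‖L ^ k‖ * ‖EV (mLift n m x)‖ := by have := (L ^ k).l2_opNorm_mulVec (EV (mLift n m x)); exact this
        _ = ‖L ^ k‖ * ‖EV x‖ ^ m := by rw [norm_EV_mLift]
    have hbound : ‖A ^ k‖ ≤ ‖L ^ k‖ ^ ((m:ℝ)⁻¹) := by
      refine opNorm_le (Real.rpow_nonneg (norm_nonneg _) _) fun x => ?_
      have h1 := hkey x
      have hc : (0:ℝ) ≤ ‖L ^ k‖ ^ ((m:ℝ)⁻¹) := Real.rpow_nonneg (norm_nonneg _) _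
      have h2 : (‖L ^ k‖ ^ ((m:ℝ)⁻¹) * ‖EV x‖) ^ m = ‖L ^ k‖ * ‖EV x‖ ^ m := by
        rw [mul_pow, Real.rpow_inv_natCast_pow (norm_nonneg _) hm.ne']
      have := h1.trans_eq h2.symm
      exact (pow_le_pow_iff_left₀ (norm_nonneg _) (by positivity) hm.ne').mp this
    calc ‖A ^ k‖ ^ m ≤ (‖L ^ k‖ ^ ((m:ℝ)⁻¹)) ^ m :=
          pow_le_pow_left₀ (norm_nonneg _) hbound m
      _ = ‖L ^ k‖ := Real.rpow_inv_natCast_pow (norm_nonneg _) hm.ne'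
  -- the upper bound F2 : ‖L^k‖ ≤ D * ‖A^k‖^m
  have hrep : ∀ β : ι, ∃ c : (Fin n → ℝ) →₀ ℝ,
      (c.sum fun x t => t • EV (mLift n m x)) = EV (Pi.single β 1) := by
    intro β
    have : EV (Pi.single β 1) ∈ Submodule.span ℝ
        (Set.range (fun x : Fin n → ℝ => EV (mLift n m x))) := by
      rw [span_mLift n m]; trivial
    exact Finsupp.mem_span_range_iff_exists_finsupp.mp this
  choose rep hrepEq using hrep
  set D : ℝ := ∑ β : ι, (rep β).sum fun x t => |t| * ‖EV x‖ ^ m with hD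
  have hCβ0 : ∀ β : ι, 0 ≤ (rep β).sum fun x t => |t| * ‖EV x‖ ^ m := by
    intro β
    refine Finset.sum_nonneg fun x _ => by positivity
  have hD0 : 0 ≤ D := Finset.sum_nonneg fun β _ => hCβ0 β
  have hsingle : ∀ β : ι, Pi.single β 1 = (rep β).sum fun x t => t • mLift n m x := by
    intro β
    apply (EVL ι).injective
    rw [← EV_eq_EVL, ← hrepEq β]
    rw [map_finsuppSum]
    exact Finsupp.sum_congr fun x _ => by rw [_root_.map_smul, ← EV_eq_EVL]
  have hbase : ∀ (k : ℕ) (β : ι), ‖EV ((L ^ k) *ᵥ Pi.single β 1)‖ ≤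
      ((rep β).sum fun x t => |t| * ‖EV x‖ ^ m) * ‖A ^ k‖ ^ m := by
    intro k β
    rw [hsingle β]
    have hmv : (L ^ k) *ᵥ ((rep β).sum fun x t => t • mLift n m x) =
        (rep β).sum fun x t => t • mLift n m ((A ^ k) *ᵥ x) := by
      rw [Finsupp.sum, Finsupp.sum, ← Matrix.mulVecLin_apply, map_sum]
      exact Finset.sum_congr rfl fun x _ => by
        rw [Matrix.mulVecLin_apply, Matrix.mulVec_smul, mLift_pow hL]
    rw [hmv]
    have hEV : EV ((rep β).sum fun x t => t • mLift n m ((A ^ k) *ᵥ x)) =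
        (rep β).sum fun x t => t • EV (mLift n m ((A ^ k) *ᵥ x)) := by
      rw [EV_eq_EVL, map_finsuppSum]
      exact Finsupp.sum_congr fun x _ => by rw [_root_.map_smul, ← EV_eq_EVL]
    rw [hEV, Finsupp.sum, Finsupp.sum, Finset.sum_mul]
    refine (norm_sum_le _ _).trans (Finset.sum_le_sum fun x _ => ?_)
    rw [norm_smul, Real.norm_eq_abs, norm_EV_mLift]
    calc |(rep β) x| * ‖EV ((A ^ k) *ᵥ x)‖ ^ m
        ≤ |(rep β) x| * (‖A ^ k‖ * ‖EV x‖) ^ m := by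
          refine mul_le_mul_of_nonneg_left (pow_le_pow_left₀ (norm_nonneg _)
            (by have := (A ^ k).l2_opNorm_mulVec (EV x); exact this) m) (abs_nonneg _)
      _ = |(rep β) x| * ‖EV x‖ ^ m * ‖A ^ k‖ ^ m := by ring
  have hF2 : ∀ k : ℕ, ‖L ^ k‖ ≤ D * ‖A ^ k‖ ^ m := by
    intro k
    refine opNorm_le (by positivity) fun w => ?_
    have hw : (L ^ k) *ᵥ w = ∑ β : ι, w β • ((L ^ k) *ᵥ Pi.single β 1) := by
      conv_lhs => rw [← Finset.univ_sum_single w]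
      rw [← Matrix.mulVecLin_apply, map_sum]
      simp only [Matrix.mulVecLin_apply]
      refine Finset.sum_congr rfl fun β _ => ?_
      rw [← Matrix.mulVec_smul]
      congr 1
      rw [← Pi.single_smul, smul_eq_mul, mul_one]
    rw [hw]
    have hEV : EV (∑ β : ι, w β • ((L ^ k) *ᵥ Pi.single β 1)) =
        ∑ β : ι, w β • EV ((L ^ k) *ᵥ Pi.single β 1) := by
      rw [EV_eq_EVL, map_sum]
      exact Finset.sum_congr rfl fun β _ => by rw [_root_.map_smul, ← EV_eq_EVL]
    rw [hEV]
    refine (norm_sum_le _ _).trans ?_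
    calc ∑ β : ι, ‖w β • EV ((L ^ k) *ᵥ Pi.single β 1)‖
        ≤ ∑ β : ι, ‖EV w‖ * (((rep β).sum fun x t => |t| * ‖EV x‖ ^ m) * ‖A ^ k‖ ^ m) := by
          refine Finset.sum_le_sum fun β _ => ?_
          rw [norm_smul, Real.norm_eq_abs]
          refine mul_le_mul (abs_coord_le_norm_EV w β) (hbase k β) (norm_nonneg _)
            (norm_nonneg _)
      _ = D * ‖A ^ k‖ ^ m * ‖EV w‖ := by
          rw [← Finset.mul_sum, ← Finset.sum_mul, hD]
          ring
  -- pass to nnnorms and complexifications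
  set u : ℕ → ℝ≥0 := fun k => ‖Lc ^ k‖₊ with hu
  set v : ℕ → ℝ≥0 := fun k => ‖Ac ^ k‖₊ with hv
  set c₁ : ℝ≥0 := 2 * (D.toNNReal + 1) with hc₁
  have hineq1 : ∀ k, u k ≤ c₁ * v k ^ m := by
    intro k
    rw [← NNReal.coe_le_coe]
    push_cast
    calc (‖Lc ^ k‖₊ : ℝ) = ‖Lc ^ k‖ := rfl
      _ = ‖(L ^ k).map (algebraMap ℝ ℂ)‖ := by rw [hpowL]
      _ ≤ 2 * ‖L ^ k‖ := complex_le_two_real_opNorm _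
      _ ≤ 2 * (D * ‖A ^ k‖ ^ m) := by
          have := hF2 k; nlinarith
      _ ≤ 2 * ((D + 1) * ‖Ac ^ k‖ ^ m) := by
          have h1 : ‖A ^ k‖ ≤ ‖Ac ^ k‖ := by
            rw [hpowA]; exact real_le_complex_opNorm _
          have h2 : ‖A ^ k‖ ^ m ≤ ‖Ac ^ k‖ ^ m := pow_le_pow_left₀ (norm_nonneg _) h1 m
          have h3 : (0:ℝ) ≤ ‖Ac ^ k‖ ^ m := by positivity
          nlinarith
      _ = 2 * (D + 1) * ‖Ac ^ k‖ ^ m := by ring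
      _ = (c₁ : ℝ) * ‖Ac ^ k‖ ^ m := by
          rw [hc₁]; push_cast [Real.coe_toNNReal D hD0]; ring
  set c₂ : ℝ≥0 := 2 ^ m with hc₂
  have hineq2 : ∀ k, v k ^ m ≤ c₂ * u k := by
    intro k
    rw [← NNReal.coe_le_coe]
    push_cast
    calc (‖Ac ^ k‖ : ℝ) ^ m ≤ (2 * ‖A ^ k‖) ^ m := by
          refine pow_le_pow_left₀ (norm_nonneg _) ?_ m
          rw [hpowA]; exact complex_le_two_real_opNorm _
      _ = 2 ^ m * ‖A ^ k‖ ^ m := by rw [mul_pow]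
      _ ≤ 2 ^ m * ‖L ^ k‖ := by
          have := hF1 k
          have h2 : (0:ℝ) < 2 ^ m := by positivity
          nlinarith
      _ ≤ 2 ^ m * ‖Lc ^ k‖ := by
          have h1 : ‖L ^ k‖ ≤ ‖Lc ^ k‖ := by
            rw [hpowL]; exact real_le_complex_opNorm _
          have h2 : (0:ℝ) < 2 ^ m := by positivity
          nlinarith
  have hc₁0 : c₁ ≠ 0 := by
    rw [hc₁]
    positivity
  have hc₂0 : c₂ ≠ 0 := by
    rw [hc₂]
    positivity
  -- conclude
  have h1 : specRad L ≤ specRad A ^ m := le_squeeze hc₁0 hGL hGAm hineq1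
  have h2 : specRad A ^ m ≤ specRad L := le_squeeze hc₂0 hGAm hGL hineq2
  exact le_antisymm h1 h2
end

section
/- Let (F_k)_{k≥0} be an independent, identically distributed sequence of random n×n real matrices with E[‖F₀‖^m] < ∞, and let x_d(k) = F_{k−1}⋯F₁F₀ x₀ for a deterministic x₀ ∈ ℝ^n. Then for every k ≥ 0, E[x_d(k)^[m]] = (E[F₀^[m]])^k · x₀^[m], where the expectations of vectors and matrices are taken entrywise. -/
open scoped BigOperators
open MeasureTheory ProbabilityTheory
open scoped Matrix.Norms.L2Operator

noncomputable section

open scoped BigOperators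


/-- The (Borel product) measurable structure on matrices, entrywise. -/
instance matrixMeasurableSpace {m n α : Type*} [MeasurableSpace α] :
    MeasurableSpace (Matrix m n α) :=
  (inferInstance : MeasurableSpace (m → n → α))

/-- `prodSeq F k ω = F_{k-1}(ω) ⋯ F_1(ω) F_0(ω)` (the empty product for `k = 0`). -/
def prodSeq {Ω : Type*} {n : ℕ} (F : ℕ → Ω → Matrix (Fin n) (Fin n) ℝ) :
    ℕ → Ω → Matrix (Fin n) (Fin n) ℝ
  | 0 => fun _ => 1
  | k + 1 => fun ω => F k ω * prodSeq F k ω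

/-- The state `x_d(k) = F_{k-1} ⋯ F_1 F_0 x₀` of the system `Σ_μ`. -/
def xd {Ω : Type*} {n : ℕ} (F : ℕ → Ω → Matrix (Fin n) (Fin n) ℝ)
    (x₀ : Fin n → ℝ) (k : ℕ) (ω : Ω) : Fin n → ℝ :=
  (prodSeq F k ω).mulVec x₀

/-- Entrywise expectation of a random matrix. -/
def matExpVal {Ω : Type*} [MeasurableSpace Ω] (P : Measure Ω) {N : Type*}
    (M : Ω → Matrix N N ℝ) : Matrix N N ℝ :=
  Matrix.of fun i j => ∫ ω, M ω i j ∂P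

/-- Exponential `m`th mean stability of `Σ_μ`. -/
def ExpMeanStable {Ω : Type*} [MeasurableSpace Ω] (P : Measure Ω) {n : ℕ}
    (F : ℕ → Ω → Matrix (Fin n) (Fin n) ℝ) (m : ℕ) : Prop :=
  ∃ a : ℝ, 0 < a ∧ ∃ b : ℝ, 0 < b ∧ ∀ x₀ : Fin n → ℝ, ∀ k : ℕ,
    (∫ ω, euclNorm (xd F x₀ k ω) ^ m ∂P) ≤ a * Real.exp (-b * k) * euclNorm x₀ ^ m

/-- Stochastic `m`th mean stability of `Σ_μ`. -/
def StochMeanStable {Ω : Type*} [MeasurableSpace Ω] (P : Measure Ω) {n : ℕ}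
    (F : ℕ → Ω → Matrix (Fin n) (Fin n) ℝ) (m : ℕ) : Prop :=
  ∀ x₀ : Fin n → ℝ, Summable fun k => ∫ ω, euclNorm (xd F x₀ k ω) ^ m ∂P

/-- Positivity of the system `Σ_μ`. -/
def PositiveSys {Ω : Type*} [MeasurableSpace Ω] (P : Measure Ω) {n : ℕ}
    (F : ℕ → Ω → Matrix (Fin n) (Fin n) ℝ) : Prop :=
  ∀ x₀ : Fin n → ℝ, (∀ i, 0 ≤ x₀ i) → ∀ k : ℕ, ∀ᵐ ω ∂P, ∀ i, 0 ≤ xd F x₀ k ω i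

namespace MLA

def frob {n : ℕ} (A : Matrix (Fin n) (Fin n) ℝ) : ℝ := Real.sqrt (∑ i, ∑ j, A i j ^ 2)

lemma euclNorm_nonneg {n : ℕ} (v : Fin n → ℝ) : 0 ≤ euclNorm v := Real.sqrt_nonneg _

lemma frob_nonneg {n : ℕ} (A : Matrix (Fin n) (Fin n) ℝ) : 0 ≤ frob A := Real.sqrt_nonneg _

lemma abs_le_euclNorm {n : ℕ} (v : Fin n → ℝ) (i : Fin n) : |v i| ≤ euclNorm v := by
  rw [← Real.sqrt_sq_eq_abs]
  exact Real.sqrt_le_sqrt (Finset.single_le_sum (f := fun j => v j ^ 2)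
    (fun j _ => sq_nonneg _) (Finset.mem_univ i))

lemma euclNorm_mulVec_le {n : ℕ} (A : Matrix (Fin n) (Fin n) ℝ) (y : Fin n → ℝ) :
    euclNorm (A.mulVec y) ≤ frob A * euclNorm y := by
  have h1 : ∀ i, (A.mulVec y i) ^ 2 ≤ (∑ j, A i j ^ 2) * (∑ j, y j ^ 2) := by
    intro i
    simpa [Matrix.mulVec, dotProduct] using
      Finset.sum_mul_sq_le_sq_mul_sq Finset.univ (fun j => A i j) y
  calc euclNorm (A.mulVec y) ≤ Real.sqrt (∑ i, (∑ j, A i j ^ 2) * (∑ j, y j ^ 2)) := by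
        exact Real.sqrt_le_sqrt (Finset.sum_le_sum fun i _ => h1 i)
    _ = frob A * euclNorm y := by
        rw [← Finset.sum_mul, Real.sqrt_mul (by positivity)]; rfl

lemma abs_mLift_le {n m : ℕ} (v : Fin n → ℝ) (α : {α : Fin n → ℕ // ∑ i, α i = m}) :
    |mLift n m v α| ≤ Real.sqrt (Nat.multinomial Finset.univ α.1) * euclNorm v ^ m := by
  rw [mLift, abs_mul, abs_of_nonneg (Real.sqrt_nonneg _)]
  refine mul_le_mul_of_nonneg_left ?_ (Real.sqrt_nonneg _)
  rw [Finset.abs_prod]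
  calc (∏ i, |v i ^ α.1 i|) = ∏ i, |v i| ^ α.1 i := by simp [abs_pow]
    _ ≤ ∏ i, euclNorm v ^ α.1 i :=
        Finset.prod_le_prod (fun i _ => by positivity)
          (fun i _ => pow_le_pow_left₀ (abs_nonneg _) (abs_le_euclNorm v i) _)
    _ = euclNorm v ^ m := by rw [Finset.prod_pow_eq_pow_sum, α.2]

lemma abs_mLift_mulVec_le {n m : ℕ} (A : Matrix (Fin n) (Fin n) ℝ) (y : Fin n → ℝ)
    (α : {α : Fin n → ℕ // ∑ i, α i = m}) :
    |mLift n m (A.mulVec y) α| ≤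
      Real.sqrt (Nat.multinomial Finset.univ α.1) * (frob A ^ m * euclNorm y ^ m) := by
  refine (abs_mLift_le _ α).trans ?_
  rw [← mul_pow]
  refine mul_le_mul_of_nonneg_left ?_ (Real.sqrt_nonneg _)
  exact pow_le_pow_left₀ (euclNorm_nonneg _) (euclNorm_mulVec_le A y) _

lemma euclNorm_eq {n : ℕ} (v : Fin n → ℝ) :
    euclNorm v = ‖(EuclideanSpace.equiv (Fin n) ℝ).symm v‖ := by
  rw [EuclideanSpace.norm_eq]
  simp [euclNorm, Real.norm_eq_abs, sq_abs]

lemma euclNorm_mulVec_le_opNorm {n : ℕ} (A : Matrix (Fin n) (Fin n) ℝ) (y : Fin n → ℝ) :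
    euclNorm (A.mulVec y) ≤ ‖A‖ * euclNorm y := by
  rw [euclNorm_eq, euclNorm_eq y]
  exact Matrix.l2_opNorm_mulVec A _

lemma frob_le_opNorm {n : ℕ} (A : Matrix (Fin n) (Fin n) ℝ) :
    frob A ≤ Real.sqrt n * ‖A‖ := by
  have h1 : ∀ j : Fin n, euclNorm (fun i => A i j) ≤ ‖A‖ := by
    intro j
    have h2 := euclNorm_mulVec_le_opNorm A (Pi.single j 1)
    have h3 : A.mulVec (Pi.single j 1) = fun i => A i j := by
      funext i; simp [Matrix.mulVec_single]
    have h4 : euclNorm (Pi.single j 1 : Fin n → ℝ) = 1 := by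
      have : (∑ i, (Pi.single j 1 : Fin n → ℝ) i ^ 2) = 1 := by
        simp [Pi.single_apply, ite_pow, Finset.sum_ite_eq' Finset.univ j (fun _ => (1:ℝ)^2)]
      rw [euclNorm, this, Real.sqrt_one]
    rw [h3, h4, mul_one] at h2
    exact h2
  have h5 : frob A ≤ Real.sqrt (∑ _j : Fin n, ‖A‖ ^ 2) := by
    rw [frob, Finset.sum_comm]
    refine Real.sqrt_le_sqrt (Finset.sum_le_sum fun j _ => ?_)
    have := h1 j
    have h6 : ∑ i, A i j ^ 2 = euclNorm (fun i => A i j) ^ 2 := by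
      rw [euclNorm, Real.sq_sqrt (by positivity)]
    rw [h6]
    exact pow_le_pow_left₀ (euclNorm_nonneg _) this 2
  refine h5.trans_eq ?_
  rw [Finset.sum_const, Finset.card_univ, Fintype.card_fin, nsmul_eq_mul,
    Real.sqrt_mul (by positivity), Real.sqrt_sq (norm_nonneg _)]

end MLA
namespace MLA
open MvPolynomial

variable {n m : ℕ}

lemma sqrt_mult_pos (α : {α : Fin n → ℕ // ∑ i, α i = m}) :
    0 < Real.sqrt (Nat.multinomial Finset.univ α.1) := by
  have : 0 < (Nat.multinomial Finset.univ α.1 : ℝ) := by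
    exact_mod_cast Nat.multinomial_pos _ _
  positivity

lemma span_mLift_eq_top (n m : ℕ) :
    Submodule.span ℝ (Set.range (mLift n m)) = ⊤ := by
  by_contra hne
  obtain ⟨f, hf0, hker⟩ := Submodule.exists_dual_map_eq_bot_of_lt_top
    (lt_top_iff_ne_top.2 hne) inferInstance
  have hfz : ∀ x : Fin n → ℝ, f (mLift n m x) = 0 := by
    intro x
    have hx : mLift n m x ∈ Submodule.span ℝ (Set.range (mLift n m)) :=
      Submodule.subset_span ⟨x, rfl⟩
    have : f (mLift n m x) ∈ Submodule.map f (Submodule.span ℝ (Set.range (mLift n m))) :=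
      Submodule.mem_map_of_mem hx
    rw [hker] at this
    simpa using this
  set e : {α : Fin n → ℕ // ∑ i, α i = m} → {α : Fin n → ℕ // ∑ i, α i = m} → ℝ :=
    fun β γ => if γ = β then 1 else 0 with he
  have hdecomp : ∀ w : {α : Fin n → ℕ // ∑ i, α i = m} → ℝ, w = ∑ β, w β • e β := by
    intro w
    funext γ
    rw [Finset.sum_apply]
    simp only [he, Pi.smul_apply, smul_eq_mul, mul_ite, mul_one, mul_zero]
    rw [Finset.sum_ite_eq Finset.univ γ w]
    simp
  have hfe : ∀ β, f (e β) = 0 := by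
    set p : MvPolynomial (Fin n) ℝ :=
      ∑ β : {α : Fin n → ℕ // ∑ i, α i = m},
        monomial (Finsupp.equivFunOnFinite.symm β.1)
          (f (e β) * Real.sqrt (Nat.multinomial Finset.univ β.1)) with hp
    have heval : ∀ x : Fin n → ℝ, eval x p = f (mLift n m x) := by
      intro x
      rw [hp, map_sum]
      conv_rhs => rw [hdecomp (mLift n m x), map_sum]
      refine Finset.sum_congr rfl fun β _ => ?_
      rw [eval_monomial]
      have hprod : ((Finsupp.equivFunOnFinite.symm β.1).prod fun i k => x i ^ k)
          = ∏ i, x i ^ β.1 i := by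
        rw [Finsupp.prod_pow]
        simp
      rw [hprod, LinearMap.map_smul, smul_eq_mul]
      simp only [mLift]
      ring
    have hp0 : p = 0 := by
      apply MvPolynomial.funext
      intro x
      rw [heval, hfz, map_zero]
    intro β
    have hc : coeff (Finsupp.equivFunOnFinite.symm β.1) p
        = f (e β) * Real.sqrt (Nat.multinomial Finset.univ β.1) := by
      rw [hp, MvPolynomial.coeff_sum]
      rw [Finset.sum_eq_single β]
      · rw [coeff_monomial, if_pos rfl]
      · intro γ _ hγ
        rw [coeff_monomial, if_neg]
        intro hcontra
        exact hγ (Subtype.ext (Finsupp.equivFunOnFinite.symm.injective hcontra))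
      · intro h; exact absurd (Finset.mem_univ β) h
    rw [hp0, coeff_zero] at hc
    exact (mul_eq_zero.1 hc.symm).resolve_right (sqrt_mult_pos β).ne'
  apply hf0
  apply LinearMap.ext
  intro w
  rw [hdecomp w, map_sum]
  simp [hfe]

lemma exists_rep (n m : ℕ) (β : {α : Fin n → ℕ // ∑ i, α i = m}) :
    ∃ (N : ℕ) (c : Fin N → ℝ) (y : Fin N → (Fin n → ℝ)),
      (fun γ => if γ = β then (1:ℝ) else 0) = ∑ i, c i • mLift n m (y i) := by
  have h : (fun γ => if γ = β then (1:ℝ) else 0)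
      ∈ Submodule.span ℝ (Set.range (mLift n m)) := by
    rw [span_mLift_eq_top]; trivial
  rw [Submodule.mem_span_set'] at h
  obtain ⟨N, c, g, hg⟩ := h
  choose y hy using fun i => (g i).2
  exact ⟨N, c, y, by rw [← hg]; exact (Finset.sum_congr rfl fun i _ => by rw [hy i]).symm⟩

lemma lift_entry {A : Matrix (Fin n) (Fin n) ℝ}
    {M : Matrix {α : Fin n → ℕ // ∑ i, α i = m} {α : Fin n → ℕ // ∑ i, α i = m} ℝ}
    (hA : IsMatrixLift n m A M) (α β : {α : Fin n → ℕ // ∑ i, α i = m})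
    {N : ℕ} {c : Fin N → ℝ} {y : Fin N → Fin n → ℝ}
    (hrep : (fun γ => if γ = β then (1:ℝ) else 0) = ∑ i, c i • mLift n m (y i)) :
    M α β = ∑ i, c i * mLift n m (A.mulVec (y i)) α := by
  calc M α β = ∑ γ, M α γ * (if γ = β then (1:ℝ) else 0) := by
        simp only [mul_ite, mul_one, mul_zero]
        rw [Finset.sum_ite_eq' Finset.univ β (fun γ => M α γ)]
        simp
    _ = ∑ γ, M α γ * (∑ i, c i * mLift n m (y i) γ) := by
        refine Finset.sum_congr rfl fun γ _ => ?_
        congr 1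
        have := congrFun hrep γ
        rw [this, Finset.sum_apply]
        simp
    _ = ∑ i, c i * (∑ γ, M α γ * mLift n m (y i) γ) := by
        simp_rw [Finset.mul_sum]
        rw [Finset.sum_comm]
        refine Finset.sum_congr rfl fun i _ => Finset.sum_congr rfl fun γ _ => by ring
    _ = ∑ i, c i * mLift n m (A.mulVec (y i)) α := by
        refine Finset.sum_congr rfl fun i _ => ?_
        congr 1
        rw [hA (y i)]
        rfl

end MLA

namespace MLA
open MeasureTheory ProbabilityTheory

variable {n m : ℕ}

lemma measurable_pair_mLift (n m : ℕ) (α : {α : Fin n → ℕ // ∑ i, α i = m}) :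
    Measurable fun p : Matrix (Fin n) (Fin n) ℝ × (Fin n → ℝ) =>
      mLift n m (p.1.mulVec p.2) α := by
  simp only [mLift, Matrix.mulVec, dotProduct]
  refine measurable_const.mul ?_
  refine Finset.measurable_prod _ fun i _ => Measurable.pow_const ?_ _
  refine Finset.measurable_sum _ fun j _ => Measurable.mul ?_ ?_
  · exact (measurable_pi_apply j).comp ((measurable_pi_apply i).comp measurable_fst)
  · exact (measurable_pi_apply j).comp measurable_snd

lemma measurable_mLift (n m : ℕ) (α : {α : Fin n → ℕ // ∑ i, α i = m}) :
    Measurable fun v : Fin n → ℝ => mLift n m v α := by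
  simp only [mLift]
  refine measurable_const.mul ?_
  exact Finset.measurable_prod _ fun i _ => (measurable_pi_apply i).pow_const _

lemma measurable_mLift_mulVec (n m : ℕ) (y : Fin n → ℝ)
    (α : {α : Fin n → ℕ // ∑ i, α i = m}) :
    Measurable fun A : Matrix (Fin n) (Fin n) ℝ => mLift n m (A.mulVec y) α := by
  simp only [mLift, Matrix.mulVec, dotProduct]
  refine measurable_const.mul ?_
  refine Finset.measurable_prod _ fun i _ => Measurable.pow_const ?_ _
  exact Finset.measurable_sum _ fun j _ =>
    ((measurable_pi_apply j).comp (measurable_pi_apply i)).mul_const _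

lemma measurable_frob (n : ℕ) : Measurable fun A : Matrix (Fin n) (Fin n) ℝ => frob A := by
  simp only [frob]
  exact (Finset.measurable_sum _ fun i _ => Finset.measurable_sum _ fun j _ =>
    ((measurable_pi_apply j).comp (measurable_pi_apply i)).pow_const 2).sqrt

lemma measurable_euclNorm (n : ℕ) : Measurable fun v : Fin n → ℝ => euclNorm v := by
  simp only [euclNorm]
  exact (Finset.measurable_sum _ fun i _ => (measurable_pi_apply i).pow_const 2).sqrt

lemma measurable_mulVec (n : ℕ) (x₀ : Fin n → ℝ) :
    Measurable fun A : Matrix (Fin n) (Fin n) ℝ => A.mulVec x₀ := by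
  refine measurable_pi_lambda _ fun i => ?_
  simp only [Matrix.mulVec, dotProduct]
  exact Finset.measurable_sum _ fun j _ =>
    ((measurable_pi_apply j).comp (measurable_pi_apply i)).mul_const _

lemma measurable_matMul (n : ℕ) :
    Measurable fun p : Matrix (Fin n) (Fin n) ℝ × Matrix (Fin n) (Fin n) ℝ => p.1 * p.2 := by
  refine measurable_pi_lambda _ fun i => measurable_pi_lambda _ fun j => ?_
  simp only [Matrix.mul_apply]
  exact Finset.measurable_sum _ fun k _ => Measurable.mul
    ((measurable_pi_apply k).comp ((measurable_pi_apply i).comp measurable_fst))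
    ((measurable_pi_apply j).comp ((measurable_pi_apply k).comp measurable_snd))

/-- Product of the matrices `g (k-1) * ⋯ * g 0` for a tuple `g : Fin k → Mat`. -/
def finProd (n : ℕ) : ∀ k, (Fin k → Matrix (Fin n) (Fin n) ℝ) → Matrix (Fin n) (Fin n) ℝ
  | 0 => fun _ => 1
  | k + 1 => fun g => g (Fin.last k) * finProd n k (g ∘ Fin.castSucc)

lemma measurable_finProd (n k : ℕ) : Measurable (finProd n k) := by
  induction k with
  | zero => exact measurable_const
  | succ k ih =>
      have h1 : Measurable fun g : Fin (k+1) → Matrix (Fin n) (Fin n) ℝ =>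
          (g (Fin.last k), finProd n k (g ∘ Fin.castSucc)) := by
        refine Measurable.prodMk (measurable_pi_apply _) ?_
        refine ih.comp (measurable_pi_lambda _ fun i => measurable_pi_apply _)
      exact (measurable_matMul n).comp h1

lemma finProd_eq_prodSeq {Ω : Type*} (F : ℕ → Ω → Matrix (Fin n) (Fin n) ℝ) (k : ℕ) (ω : Ω) :
    finProd n k (fun i : Fin k => F i ω) = prodSeq F k ω := by
  induction k with
  | zero => rfl
  | succ k ih =>
      show F k ω * finProd n k ((fun i : Fin (k+1) => F i ω) ∘ Fin.castSucc) = _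
      rw [show ((fun i : Fin (k+1) => F i ω) ∘ Fin.castSucc) = fun i : Fin k => F i ω by
        funext i; simp [Fin.castSucc]]
      rw [ih]
      rfl

/-- a.e.-congruence for `iIndepFun`. -/
lemma iIndepFun_ae_congr {Ω ι : Type*} {β : ι → Type*} [MeasurableSpace Ω] {P : Measure Ω}
    [mβ : ∀ i, MeasurableSpace (β i)] {f g : ∀ i, Ω → β i}
    (hf : iIndepFun f P) (h : ∀ i, f i =ᵐ[P] g i) : iIndepFun g P := by
  rw [iIndepFun_iff_measure_inter_preimage_eq_mul] at hf ⊢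
  intro S sets hsets
  have hae : ∀ᵐ ω ∂P, ∀ i ∈ S, f i ω = g i ω := by
    rw [Filter.eventually_all_finset]
    exact fun i _ => h i
  have h1 : ∀ i, i ∈ S → P (g i ⁻¹' sets i) = P (f i ⁻¹' sets i) := by
    intro i hi
    refine measure_congr ?_
    filter_upwards [h i] with ω hω
    show (g i ω ∈ sets i) = (f i ω ∈ sets i)
    rw [hω]
  have h2 : P (⋂ i ∈ S, g i ⁻¹' sets i) = P (⋂ i ∈ S, f i ⁻¹' sets i) := by
    refine measure_congr ?_
    filter_upwards [hae] with ω hω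
    show (ω ∈ ⋂ i ∈ S, g i ⁻¹' sets i) = (ω ∈ ⋂ i ∈ S, f i ⁻¹' sets i)
    simp only [Set.mem_iInter, Set.mem_preimage, eq_iff_iff]
    constructor
    · intro hx i hi; rw [hω i hi]; exact hx i hi
    · intro hx i hi; rw [← hω i hi]; exact hx i hi
  rw [h2, hf S hsets]
  exact (Finset.prod_congr rfl h1).symm

end MLA


/-- Let `(F_k)` be an i.i.d. sequence of random `n × n` matrices with
`E[‖F₀‖^m] < ∞`, and `x_d(k) = F_{k-1} ⋯ F₀ x₀` for a deterministic `x₀`.  Then for every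
`k ≥ 0`, `E[x_d(k)^[m]] = (E[F₀^[m]])^k · x₀^[m]` (expectations taken entrywise). -/
theorem expectation_mLift_xd {Ω : Type*} [MeasurableSpace Ω]
    (P : Measure Ω) [IsProbabilityMeasure P] (n m : ℕ) (hm : 0 < m)
    (F : ℕ → Ω → Matrix (Fin n) (Fin n) ℝ)
    (hind : iIndepFun F P)
    (hid : ∀ k, IdentDistrib (F k) (F 0) P P)
    (hint : Integrable (fun ω => ‖F 0 ω‖ ^ m) P)
    (L : Ω → Matrix {α : Fin n → ℕ // ∑ i, α i = m} {α : Fin n → ℕ // ∑ i, α i = m} ℝ)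
    (hL : ∀ ω, IsMatrixLift n m (F 0 ω) (L ω))
    (x₀ : Fin n → ℝ) (k : ℕ) :
    (fun α => ∫ ω, mLift n m (xd F x₀ k ω) α ∂P)
      = (matExpVal P L ^ k).mulVec (mLift n m x₀) := by
  classical
  have hFae : ∀ j, AEMeasurable (F j) P := fun j => (hid j).aemeasurable_fst
  set F' : ℕ → Ω → Matrix (Fin n) (Fin n) ℝ := fun j => (hFae j).mk (F j) with hF'
  have hF'meas : ∀ j, Measurable (F' j) := fun j => (hFae j).measurable_mk
  have heq : ∀ j, F j =ᵐ[P] F' j := fun j => (hFae j).ae_eq_mk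
  have hind' : iIndepFun F' P := MLA.iIndepFun_ae_congr hind heq
  have hid' : ∀ j, IdentDistrib (F' j) (F' 0) P P := by
    intro j
    refine ⟨(hF'meas j).aemeasurable, (hF'meas 0).aemeasurable, ?_⟩
    rw [← Measure.map_congr (heq j), ← Measure.map_congr (heq 0)]
    exact (hid j).map_eq
  -- integrability of frob (F' j) ^ m
  have hfrobint0 : Integrable (fun ω => MLA.frob (F' 0 ω) ^ m) P := by
    refine Integrable.mono' (hint.const_mul ((Real.sqrt n) ^ m))
      (((MLA.measurable_frob n).pow_const m).comp (hF'meas 0)).aestronglyMeasurable ?_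
    filter_upwards [heq 0] with ω hω
    rw [Real.norm_eq_abs, abs_of_nonneg (pow_nonneg (MLA.frob_nonneg _) m), ← hω, ← mul_pow]
    exact pow_le_pow_left₀ (MLA.frob_nonneg _) (MLA.frob_le_opNorm _) m
  have hfrobint : ∀ j, Integrable (fun ω => MLA.frob (F' j ω) ^ m) P := fun j =>
    (((hid' j).comp ((MLA.measurable_frob n).pow_const m)).integrable_iff).2 hfrobint0
  -- integrability of the basic lifted observables
  have hIg : ∀ (j : ℕ) (y : Fin n → ℝ) (α : {α : Fin n → ℕ // ∑ i, α i = m}),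
      Integrable (fun ω => mLift n m ((F' j ω).mulVec y) α) P := by
    intro j y α
    refine Integrable.mono'
      ((hfrobint j).const_mul (Real.sqrt (Nat.multinomial Finset.univ α.1) * euclNorm y ^ m))
      (((MLA.measurable_mLift_mulVec n m y α).comp (hF'meas j)).aestronglyMeasurable) ?_
    refine Filter.Eventually.of_forall fun ω => ?_
    rw [Real.norm_eq_abs]
    calc |mLift n m ((F' j ω).mulVec y) α|
        ≤ Real.sqrt (Nat.multinomial Finset.univ α.1)
            * (MLA.frob (F' j ω) ^ m * euclNorm y ^ m) := MLA.abs_mLift_mulVec_le _ _ _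
      _ = Real.sqrt (Nat.multinomial Finset.univ α.1) * euclNorm y ^ m
            * MLA.frob (F' j ω) ^ m := by ring
  -- representation of the entries of L
  choose Nr cr yr hrep using MLA.exists_rep n m
  have hLentry : ∀ ω α β, L ω α β = ∑ i, cr β i * mLift n m ((F 0 ω).mulVec (yr β i)) α :=
    fun ω α β => MLA.lift_entry (hL ω) α β (hrep β)
  have hLae : ∀ α β, (fun ω => L ω α β)
      =ᵐ[P] fun ω => ∑ i, cr β i * mLift n m ((F' 0 ω).mulVec (yr β i)) α := by
    intro α β
    filter_upwards [heq 0] with ω hω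
    rw [hLentry ω α β, hω]
  have hLint : ∀ α β, Integrable (fun ω => L ω α β) P := by
    intro α β
    exact Integrable.congr
      (integrable_finset_sum _ fun i _ => ((hIg 0 (yr β i) α).const_mul _)) (hLae α β).symm
  -- key lemma: expectation of one step against a fixed vector
  have hkey : ∀ (j : ℕ) (y : Fin n → ℝ) (α : {α : Fin n → ℕ // ∑ i, α i = m}),
      ∫ ω, mLift n m ((F' j ω).mulVec y) α ∂P
        = ((matExpVal P L).mulVec (mLift n m y)) α := by
    intro j y α
    have h1 : ∫ ω, mLift n m ((F' j ω).mulVec y) α ∂P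
        = ∫ ω, mLift n m ((F' 0 ω).mulVec y) α ∂P :=
      ((hid' j).comp (MLA.measurable_mLift_mulVec n m y α)).integral_eq
    have h2 : ∫ ω, mLift n m ((F' 0 ω).mulVec y) α ∂P
        = ∫ ω, ∑ β, L ω α β * mLift n m y β ∂P := by
      refine integral_congr_ae ?_
      filter_upwards [heq 0] with ω hω
      rw [← hω, congrFun (hL ω y) α]
      rfl
    have h3 : ∫ ω, ∑ β, L ω α β * mLift n m y β ∂P
        = ∑ β, (∫ ω, L ω α β ∂P) * mLift n m y β := by
      rw [integral_finset_sum _ fun β _ => (hLint α β).mul_const _]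
      exact Finset.sum_congr rfl fun β _ => integral_mul_const _ _
    rw [h1, h2, h3]
    rfl
  -- measurability of the state
  have hPmeas : ∀ j, Measurable fun ω => prodSeq F' j ω := by
    intro j
    induction j with
    | zero => exact measurable_const
    | succ j ih => exact (MLA.measurable_matMul n).comp ((hF'meas j).prodMk ih)
  have hXdmeas : ∀ j, Measurable fun ω => xd F' x₀ j ω := fun j =>
    (MLA.measurable_mulVec n x₀).comp (hPmeas j)
  -- independence of F' k from the state at time k
  have hIndep : ∀ j, IndepFun (F' j) (fun ω => xd F' x₀ j ω) P := by
    intro j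
    have h1 := hind'.indepFun_finset {j} (Finset.range j)
      (by simp [Finset.disjoint_left]) hF'meas
    have h2 : IndepFun (F' j) (fun ω => fun i : Fin j => F' i ω) P := by
      exact h1.comp (φ := fun v => v ⟨j, Finset.mem_singleton_self j⟩)
        (ψ := fun v (i : Fin j) => v ⟨(i : ℕ), Finset.mem_range.2 i.isLt⟩)
        (_mγ := inferInstance) (_mγ' := inferInstance)
        (measurable_pi_apply (⟨j, Finset.mem_singleton_self j⟩ : ({j} : Finset ℕ))) (measurable_pi_lambda _ fun i => measurable_pi_apply _)
    have h3 := h2.comp (φ := id) measurable_id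
      ((MLA.measurable_mulVec n x₀).comp (MLA.measurable_finProd n j))
    have h4 : (fun ω => (MLA.finProd n j fun i : Fin j => F' i ω).mulVec x₀)
        = fun ω => xd F' x₀ j ω := by
      funext ω
      rw [MLA.finProd_eq_prodSeq]
      rfl
    rw [← h4]
    exact h3
  -- main induction
  have main : ∀ j, ((fun α => ∫ ω, mLift n m (xd F' x₀ j ω) α ∂P)
        = (matExpVal P L ^ j).mulVec (mLift n m x₀))
      ∧ Integrable (fun ω => euclNorm (xd F' x₀ j ω) ^ m) P := by
    intro j
    induction j with
    | zero =>
      have hone : ∀ ω : Ω, xd F' x₀ 0 ω = x₀ := fun ω => Matrix.one_mulVec x₀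
      constructor
      · funext α
        simp only [hone]
        rw [integral_const]
        simp [Matrix.one_mulVec]
      · simp only [hone]
        exact integrable_const _
    | succ j ih =>
      obtain ⟨ih1, ih2⟩ := ih
      have hXV : ∀ ω, xd F' x₀ (j+1) ω = (F' j ω).mulVec (xd F' x₀ j ω) := by
        intro ω
        rw [xd, xd, prodSeq, ← Matrix.mulVec_mulVec]
      have hPX : IsProbabilityMeasure (P.map (F' j)) :=
        Measure.isProbabilityMeasure_map (hF'meas j).aemeasurable
      have hPV : IsProbabilityMeasure (P.map (fun ω => xd F' x₀ j ω)) :=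
        Measure.isProbabilityMeasure_map (hXdmeas j).aemeasurable
      constructor
      · funext α
        have hmeash := MLA.measurable_pair_mLift n m α
        have hint1 : Integrable (fun A : Matrix (Fin n) (Fin n) ℝ =>
            Real.sqrt (Nat.multinomial Finset.univ α.1) * MLA.frob A ^ m) (P.map (F' j)) := by
          rw [integrable_map_measure
            (((MLA.measurable_frob n).pow_const m).const_mul _).aestronglyMeasurable
            (hF'meas j).aemeasurable]
          exact (hfrobint j).const_mul _
        have hint2 : Integrable (fun y : Fin n → ℝ => euclNorm y ^ m)
            (P.map (fun ω => xd F' x₀ j ω)) := by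
          rw [integrable_map_measure
            ((MLA.measurable_euclNorm n).pow_const m).aestronglyMeasurable
            (hXdmeas j).aemeasurable]
          exact ih2
        have hInth : Integrable (fun p : Matrix (Fin n) (Fin n) ℝ × (Fin n → ℝ) =>
            mLift n m (p.1.mulVec p.2) α)
            ((P.map (F' j)).prod (P.map (fun ω => xd F' x₀ j ω))) := by
          refine Integrable.mono' (hint1.mul_prod hint2) hmeash.aestronglyMeasurable ?_
          refine Filter.Eventually.of_forall fun p => ?_
          rw [Real.norm_eq_abs]
          calc |mLift n m (p.1.mulVec p.2) α|
              ≤ Real.sqrt (Nat.multinomial Finset.univ α.1)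
                  * (MLA.frob p.1 ^ m * euclNorm p.2 ^ m) := MLA.abs_mLift_mulVec_le _ _ _
            _ = Real.sqrt (Nat.multinomial Finset.univ α.1) * MLA.frob p.1 ^ m
                  * euclNorm p.2 ^ m := by ring
        have hintLift : ∀ β, Integrable (fun y : Fin n → ℝ => mLift n m y β)
            (P.map (fun ω => xd F' x₀ j ω)) := by
          intro β
          refine Integrable.mono'
            (hint2.const_mul (Real.sqrt (Nat.multinomial Finset.univ β.1)))
            (MLA.measurable_mLift n m β).aestronglyMeasurable ?_
          exact Filter.Eventually.of_forall fun y => by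
            rw [Real.norm_eq_abs]; exact MLA.abs_mLift_le y β
        calc ∫ ω, mLift n m (xd F' x₀ (j+1) ω) α ∂P
            = ∫ ω, mLift n m ((F' j ω).mulVec (xd F' x₀ j ω)) α ∂P := by
              simp only [hXV]
          _ = ∫ p, mLift n m (p.1.mulVec p.2) α
                ∂(P.map fun ω => (F' j ω, xd F' x₀ j ω)) := by
              rw [integral_map ((hF'meas j).prodMk (hXdmeas j)).aemeasurable
                hmeash.aestronglyMeasurable]
          _ = ∫ p, mLift n m (p.1.mulVec p.2) α
                ∂((P.map (F' j)).prod (P.map (fun ω => xd F' x₀ j ω))) := by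
              rw [(indepFun_iff_map_prod_eq_prod_map_map (hF'meas j).aemeasurable
                (hXdmeas j).aemeasurable).1 (hIndep j)]
          _ = ∫ y, ∫ A, mLift n m (A.mulVec y) α ∂(P.map (F' j))
                ∂(P.map (fun ω => xd F' x₀ j ω)) := integral_prod_symm _ hInth
          _ = ∫ y, ((matExpVal P L).mulVec (mLift n m y)) α
                ∂(P.map (fun ω => xd F' x₀ j ω)) := by
              refine integral_congr_ae (Filter.Eventually.of_forall fun y => ?_)
              show (∫ A, mLift n m (A.mulVec y) α ∂(P.map (F' j)))
                = ((matExpVal P L).mulVec (mLift n m y)) α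
              rw [integral_map (hF'meas j).aemeasurable
                (MLA.measurable_mLift_mulVec n m y α).aestronglyMeasurable]
              exact hkey j y α
          _ = ∫ y, ∑ β, matExpVal P L α β * mLift n m y β
                ∂(P.map (fun ω => xd F' x₀ j ω)) := by rfl
          _ = ∑ β, matExpVal P L α β * ∫ y, mLift n m y β
                ∂(P.map (fun ω => xd F' x₀ j ω)) := by
              rw [integral_finset_sum _ fun β _ => (hintLift β).const_mul _]
              exact Finset.sum_congr rfl fun β _ => integral_const_mul _ _
          _ = ∑ β, matExpVal P L α β * ((matExpVal P L ^ j).mulVec (mLift n m x₀) β) := by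
              refine Finset.sum_congr rfl fun β _ => ?_
              congr 1
              rw [integral_map (hXdmeas j).aemeasurable
                (MLA.measurable_mLift n m β).aestronglyMeasurable]
              exact congrFun ih1 β
          _ = ((matExpVal P L ^ (j+1)).mulVec (mLift n m x₀)) α := by
              rw [pow_succ', ← Matrix.mulVec_mulVec]
              rfl
      · have hIndep2 : IndepFun (fun ω => MLA.frob (F' j ω) ^ m)
            (fun ω => euclNorm (xd F' x₀ j ω) ^ m) P :=
          (hIndep j).comp ((MLA.measurable_frob n).pow_const m)
            ((MLA.measurable_euclNorm n).pow_const m)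
        have hprodint : Integrable
            (fun ω => MLA.frob (F' j ω) ^ m * euclNorm (xd F' x₀ j ω) ^ m) P :=
          hIndep2.integrable_mul (hfrobint j) ih2
        refine Integrable.mono' hprodint
          (((MLA.measurable_euclNorm n).pow_const m).comp (hXdmeas (j+1))).aestronglyMeasurable ?_
        refine Filter.Eventually.of_forall fun ω => ?_
        rw [Real.norm_eq_abs, abs_of_nonneg (pow_nonneg (MLA.euclNorm_nonneg _) m), hXV ω, ← mul_pow]
        exact pow_le_pow_left₀ (MLA.euclNorm_nonneg _)
          (MLA.euclNorm_mulVec_le _ _) m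
  -- transfer back from F' to F
  have hprodeq : ∀ j, (fun ω => prodSeq F j ω) =ᵐ[P] fun ω => prodSeq F' j ω := by
    intro j
    induction j with
    | zero => exact Filter.EventuallyEq.refl _ _
    | succ j ih =>
      filter_upwards [heq j, ih] with ω h1 h2
      show F j ω * prodSeq F j ω = F' j ω * prodSeq F' j ω
      rw [h1, h2]
  funext α
  have hxe : ∫ ω, mLift n m (xd F x₀ k ω) α ∂P = ∫ ω, mLift n m (xd F' x₀ k ω) α ∂P := by
    refine integral_congr_ae ?_
    filter_upwards [hprodeq k] with ω hω
    rw [xd, xd, hω]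
  exact hxe.trans (congrFun (main k).1 α)


end
end

section
/- If the system Σ_μ is stochastically mth mean stable, then the spectral radius of the matrix E[F₀^[m]] is less than one. (No parity or positivity assumption is needed for this implication.) -/
open scoped BigOperators
open MeasureTheory ProbabilityTheory
open scoped Matrix.Norms.L2Operator

noncomputable section

open scoped BigOperators


/-! ### Auxiliary lemmas -/

section AuxAlg

variable {n m : ℕ}

lemma multinomial_cast_pos (α : Fin n → ℕ) :
    (0:ℝ) < (Nat.multinomial Finset.univ α : ℝ) := by
  exact_mod_cast Nat.multinomial_pos _ _

lemma sqrt_multinomial_pos (α : Fin n → ℕ) :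
    0 < Real.sqrt (Nat.multinomial Finset.univ α) :=
  Real.sqrt_pos.2 (multinomial_cast_pos α)

lemma mLift_sq (x : Fin n → ℝ) (α : {α : Fin n → ℕ // ∑ i, α i = m}) :
    mLift n m x α ^ 2 = (Nat.multinomial Finset.univ α.1 : ℝ) * ∏ i, (x i ^ 2) ^ α.1 i := by
  unfold mLift
  rw [mul_pow, Real.sq_sqrt (le_of_lt (multinomial_cast_pos α.1))]
  congr 1
  rw [← Finset.prod_pow]
  exact Finset.prod_congr rfl fun i _ => by ring

lemma sum_sq_mLift (x : Fin n → ℝ) :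
    ∑ α : {α : Fin n → ℕ // ∑ i, α i = m}, mLift n m x α ^ 2 = (∑ i, x i ^ 2) ^ m := by
  classical
  rw [Finset.sum_pow_eq_sum_piAntidiag]
  rw [Finset.sum_subtype (p := fun a : Fin n → ℕ => ∑ i, a i = m)
    (Finset.piAntidiag Finset.univ m)
    (fun a => by simp [Finset.mem_piAntidiag])
    (fun a => (Nat.multinomial Finset.univ a : ℝ) * ∏ i, (x i ^ 2) ^ a i)]
  exact Finset.sum_congr rfl fun α _ => mLift_sq x α

lemma euclNorm_nonneg (x : Fin n → ℝ) : 0 ≤ euclNorm x := Real.sqrt_nonneg _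

lemma euclNorm_pow_m (x : Fin n → ℝ) :
    euclNorm x ^ m = Real.sqrt ((∑ i, x i ^ 2) ^ m) := by
  have hs : (0:ℝ) ≤ ∑ i, x i ^ 2 := by positivity
  rw [euclNorm, show (∑ i, x i ^ 2) ^ m = (Real.sqrt (∑ i, x i ^ 2) ^ m) ^ 2 by
    rw [← pow_mul, mul_comm, pow_mul, Real.sq_sqrt hs],
    Real.sqrt_sq (by positivity)]

lemma abs_mLift_le (x : Fin n → ℝ) (α : {α : Fin n → ℕ // ∑ i, α i = m}) :
    |mLift n m x α| ≤ euclNorm x ^ m := by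
  rw [euclNorm_pow_m, ← Real.sqrt_sq_eq_abs]
  apply Real.sqrt_le_sqrt
  rw [← sum_sq_mLift (m := m) x]
  exact Finset.single_le_sum (f := fun β => mLift n m x β ^ 2)
    (fun β _ => sq_nonneg _) (Finset.mem_univ α)

/-- The Frobenius norm of a real square matrix. -/
def frobN (A : Matrix (Fin n) (Fin n) ℝ) : ℝ := Real.sqrt (∑ i, ∑ j, A i j ^ 2)

lemma frobN_nonneg (A : Matrix (Fin n) (Fin n) ℝ) : 0 ≤ frobN A := Real.sqrt_nonneg _

lemma euclNorm_mulVec_le (A : Matrix (Fin n) (Fin n) ℝ) (x : Fin n → ℝ) :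
    euclNorm (A.mulVec x) ≤ frobN A * euclNorm x := by
  rw [euclNorm, frobN, euclNorm, ← Real.sqrt_mul (by positivity)]
  apply Real.sqrt_le_sqrt
  have h1 : ∀ i, (A.mulVec x i) ^ 2 ≤ (∑ j, A i j ^ 2) * ∑ j, x j ^ 2 := by
    intro i
    simpa [Matrix.mulVec, dotProduct] using
      Finset.sum_mul_sq_le_sq_mul_sq Finset.univ (fun j => A i j) x
  calc ∑ i, (A.mulVec x i) ^ 2 ≤ ∑ i, (∑ j, A i j ^ 2) * ∑ j, x j ^ 2 :=
        Finset.sum_le_sum fun i _ => h1 i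
    _ = (∑ i, ∑ j, A i j ^ 2) * ∑ j, x j ^ 2 := by rw [Finset.sum_mul]

lemma euclNorm_eq_norm (x : Fin n → ℝ) :
    euclNorm x = ‖(EuclideanSpace.equiv (Fin n) ℝ).symm x‖ := by
  rw [EuclideanSpace.norm_eq, euclNorm]
  congr 1
  exact Finset.sum_congr rfl fun i _ => by
    simp [Real.norm_eq_abs, sq_abs]

lemma euclNorm_single_one (j : Fin n) : euclNorm (Pi.single j (1:ℝ)) = 1 := by
  rw [euclNorm]
  have : ∑ i : Fin n, (Pi.single j (1:ℝ) : Fin n → ℝ) i ^ 2 = 1 := by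
    rw [Finset.sum_eq_single j]
    · simp
    · intro i _ hij; simp [Pi.single_apply, hij]
    · intro h; exact absurd (Finset.mem_univ j) h
  rw [this, Real.sqrt_one]

lemma euclNorm_mulVec_le_op (A : Matrix (Fin n) (Fin n) ℝ) (x : Fin n → ℝ) :
    euclNorm (A.mulVec x) ≤ ‖A‖ * euclNorm x := by
  have h := Matrix.l2_opNorm_mulVec A ((EuclideanSpace.equiv (Fin n) ℝ).symm x)
  have e1 : ‖(EuclideanSpace.equiv (Fin n) ℝ).symm
      (A.mulVec ((EuclideanSpace.equiv (Fin n) ℝ).symm x))‖ = euclNorm (A.mulVec x) := by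
    rw [euclNorm_eq_norm]; rfl
  have e2 : ‖(EuclideanSpace.equiv (Fin n) ℝ).symm x‖ = euclNorm x := (euclNorm_eq_norm x).symm
  rw [e1, e2] at h
  exact h

lemma frobN_le_opNorm (A : Matrix (Fin n) (Fin n) ℝ) :
    frobN A ≤ Real.sqrt n * ‖A‖ := by
  have hcol : ∀ j, euclNorm (A.mulVec (Pi.single j 1 : Fin n → ℝ)) ≤ ‖A‖ := by
    intro j
    have := euclNorm_mulVec_le_op A (Pi.single j 1 : Fin n → ℝ)
    rwa [euclNorm_single_one, mul_one] at this
  have hsq : ∑ i, ∑ j, A i j ^ 2 ≤ (n : ℝ) * ‖A‖ ^ 2 := by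
    rw [Finset.sum_comm]
    have hAj : ∀ j, ∑ i, A i j ^ 2 ≤ ‖A‖ ^ 2 := by
      intro j
      have h1 : euclNorm (A.mulVec (Pi.single j 1)) ^ 2 ≤ ‖A‖ ^ 2 := by
        have h0 : (0:ℝ) ≤ euclNorm (A.mulVec (Pi.single j 1)) := euclNorm_nonneg _
        exact pow_le_pow_left₀ h0 (hcol j) 2
      have h2 : euclNorm (A.mulVec (Pi.single j 1)) ^ 2 = ∑ i, A i j ^ 2 := by
        rw [euclNorm, Real.sq_sqrt (by positivity)]
        refine Finset.sum_congr rfl fun i _ => ?_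
        congr 1
        simp [Matrix.mulVec, dotProduct, Pi.single_apply, mul_ite]
      rw [← h2]; exact h1
    calc ∑ j, ∑ i, A i j ^ 2 ≤ ∑ _j : Fin n, ‖A‖ ^ 2 :=
          Finset.sum_le_sum fun j _ => hAj j
      _ = (n : ℝ) * ‖A‖ ^ 2 := by simp [Finset.sum_const, mul_comm]
  calc frobN A ≤ Real.sqrt ((n : ℝ) * ‖A‖ ^ 2) := Real.sqrt_le_sqrt hsq
    _ = Real.sqrt n * ‖A‖ := by
        rw [Real.sqrt_mul (by positivity), Real.sqrt_sq (norm_nonneg A)]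

end AuxAlg

section AuxLift

open MvPolynomial

variable {n m : ℕ}

lemma finsupp_degree_eq (d : Fin n →₀ ℕ) : d.degree = ∑ i, d i :=
  Finset.sum_subset (Finset.subset_univ _) fun i _ hi => Finsupp.notMem_support_iff.mp hi

lemma exists_isMatrixLift (n m : ℕ) (A : Matrix (Fin n) (Fin n) ℝ) :
    ∃ K, IsMatrixLift n m A K := by
  classical
  set e : {α : Fin n → ℕ // ∑ i, α i = m} → (Fin n →₀ ℕ) :=
    fun β => Finsupp.equivFunOnFinite.symm β.1 with he
  have he_inj : Function.Injective e := fun a b hab =>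
    Subtype.ext (Finsupp.equivFunOnFinite.symm.injective hab)
  set p : {α : Fin n → ℕ // ∑ i, α i = m} → MvPolynomial (Fin n) ℝ :=
    fun α => ∏ i, (∑ j, (C (A i j) * X j)) ^ α.1 i with hp
  have hphom : ∀ α, (p α).IsHomogeneous m := by
    intro α
    have h := MvPolynomial.IsHomogeneous.prod Finset.univ
      (fun i => (∑ j, (C (A i j) * X j)) ^ α.1 i) (fun i => α.1 i)
      (fun i _ => by
        simpa using (MvPolynomial.IsHomogeneous.pow
          (MvPolynomial.IsHomogeneous.sum Finset.univ _ 1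
            (fun j _ => isHomogeneous_C_mul_X _ _)) (α.1 i)))
    rwa [α.2] at h
  have heval : ∀ (x : Fin n → ℝ) α, mLift n m (A.mulVec x) α
      = Real.sqrt (Nat.multinomial Finset.univ α.1) * eval x (p α) := by
    intro x α
    unfold mLift
    congr 1
    rw [hp]
    simp only [eval_prod, eval_pow, map_sum, eval_mul, eval_C, eval_X]
    refine Finset.prod_congr rfl fun i _ => ?_
    congr 1
  refine ⟨Matrix.of (fun α β => Real.sqrt (Nat.multinomial Finset.univ α.1) *
      coeff (e β) (p α) / Real.sqrt (Nat.multinomial Finset.univ β.1)), ?_⟩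
  intro x
  funext α
  rw [heval x α]
  have hsupp : (p α).support ⊆ Finset.univ.map ⟨e, he_inj⟩ := by
    intro d hd
    have hdeg : d.degree = m := by
      by_contra hne
      exact (MvPolynomial.mem_support_iff.mp hd) ((hphom α).coeff_eq_zero hne)
    refine Finset.mem_map.mpr ⟨⟨Finsupp.equivFunOnFinite d, ?_⟩, Finset.mem_univ _, ?_⟩
    · rw [← hdeg, finsupp_degree_eq d]
      rfl
    · simp [he]
  have hEval : eval x (p α) = ∑ β : {α : Fin n → ℕ // ∑ i, α i = m},
      coeff (e β) (p α) * ∏ i, x i ^ β.1 i := by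
    rw [eval_eq']
    rw [Finset.sum_subset hsupp (fun d _ hd => by
      rw [MvPolynomial.notMem_support_iff.mp hd, zero_mul])]
    rw [Finset.sum_map]
    refine Finset.sum_congr rfl fun β _ => ?_
    simp only [Function.Embedding.coeFn_mk]
    rfl
  rw [hEval, Finset.mul_sum]
  simp only [Matrix.mulVec, dotProduct, Matrix.of_apply]
  refine Finset.sum_congr rfl fun β _ => ?_
  unfold mLift
  have hβ : Real.sqrt (Nat.multinomial Finset.univ β.1) ≠ 0 :=
    ne_of_gt (sqrt_multinomial_pos β.1)
  field_simp

lemma exists_mLift_rep (n m : ℕ) (β : {α : Fin n → ℕ // ∑ i, α i = m}) :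
    ∃ c : (Fin n → ℝ) →₀ ℝ,
      (c.sum fun y a => a • mLift n m y) = Pi.single β 1 := by
  classical
  set g : (Fin n → ℝ) → EuclideanSpace ℝ {α : Fin n → ℕ // ∑ i, α i = m} :=
    fun y => WithLp.toLp 2 (mLift n m y) with hg
  have hker : ∀ w : EuclideanSpace ℝ {α : Fin n → ℕ // ∑ i, α i = m},
      (∀ y, inner ℝ w (g y) = 0) → w = 0 := by
    intro w hw
    set e : {α : Fin n → ℕ // ∑ i, α i = m} → (Fin n →₀ ℕ) :=
      fun β => Finsupp.equivFunOnFinite.symm β.1 with he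
    have he_inj : Function.Injective e := fun a b hab =>
      Subtype.ext (Finsupp.equivFunOnFinite.symm.injective hab)
    set q : MvPolynomial (Fin n) ℝ :=
      ∑ α : {α : Fin n → ℕ // ∑ i, α i = m}, MvPolynomial.monomial (e α)
        (w α * Real.sqrt (Nat.multinomial Finset.univ α.1)) with hq
    have hqeval : ∀ x, eval x q
        = ∑ α : {α : Fin n → ℕ // ∑ i, α i = m}, w α * mLift n m x α := by
      intro x
      rw [hq, map_sum]
      refine Finset.sum_congr rfl fun α _ => ?_
      rw [eval_monomial]
      rw [Finsupp.prod_fintype _ _ (fun i => pow_zero _)]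
      unfold mLift
      have : ∀ i, (e α) i = α.1 i := fun i => rfl
      simp only [this]
      ring
    have hq0 : q = 0 := by
      apply MvPolynomial.funext
      intro x
      rw [hqeval x, map_zero]
      have h2 := hw x
      rw [PiLp.inner_apply] at h2
      simpa [hg, mul_comm] using h2
    ext α
    have hc : coeff (e α) q = w α * Real.sqrt (Nat.multinomial Finset.univ α.1) := by
      rw [hq, MvPolynomial.coeff_sum]
      rw [Finset.sum_eq_single α]
      · rw [coeff_monomial, if_pos rfl]
      · intro β _ hβα
        rw [coeff_monomial, if_neg (fun h => hβα (he_inj h))]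
      · intro h; exact absurd (Finset.mem_univ α) h
    rw [hq0, coeff_zero] at hc
    have := (mul_eq_zero.mp hc.symm).resolve_right
      (ne_of_gt (sqrt_multinomial_pos α.1))
    simpa using this
  have horth : (Submodule.span ℝ (Set.range g))ᗮ = ⊥ := by
    rw [Submodule.eq_bot_iff]
    intro w hw
    apply hker
    intro y
    have h3 := (Submodule.mem_orthogonal _ w).mp hw (g y)
      (Submodule.subset_span ⟨y, rfl⟩)
    rw [real_inner_comm]
    exact h3
  have hspan : Submodule.span ℝ (Set.range g) = ⊤ :=
    Submodule.orthogonal_eq_bot_iff.mp horth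
  have hmem : WithLp.toLp 2 (Pi.single β 1 : {α : Fin n → ℕ // ∑ i, α i = m} → ℝ)
      ∈ Submodule.span ℝ (Set.range g) := by
    rw [hspan]; trivial
  obtain ⟨c, hc⟩ := Finsupp.mem_span_range_iff_exists_finsupp.mp hmem
  have hc' := congrArg (WithLp.ofLp (p := 2)) hc
  simp only [hg, Finsupp.sum, WithLp.ofLp_sum, WithLp.ofLp_smul] at hc'
  exact ⟨c, hc'⟩

lemma matrix_entry_rep
    (K : Matrix {α : Fin n → ℕ // ∑ i, α i = m} {α : Fin n → ℕ // ∑ i, α i = m} ℝ)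
    (β : {α : Fin n → ℕ // ∑ i, α i = m})
    {c : (Fin n → ℝ) →₀ ℝ} (hc : (c.sum fun y a => a • mLift n m y) = Pi.single β 1)
    (α : {α : Fin n → ℕ // ∑ i, α i = m}) :
    K α β = c.sum fun y a => a * K.mulVec (mLift n m y) α := by
  have h1 : K.mulVec (Pi.single β 1) α = K α β := by
    simp [Matrix.mulVec, dotProduct, Pi.single_apply, mul_ite]
  rw [← h1, ← hc]
  have h2 : K.mulVec (c.sum fun y a => a • mLift n m y)
      = c.sum fun y a => a • K.mulVec (mLift n m y) := by
    rw [show K.mulVec (c.sum fun y a => a • mLift n m y)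
        = K.mulVecLin (c.sum fun y a => a • mLift n m y) from rfl]
    rw [map_finsuppSum]
    exact Finsupp.sum_congr fun y _ => K.mulVecLin.map_smul (c y) (mLift n m y)
  rw [h2]
  simp only [Finsupp.sum, Finset.sum_apply]
  refine Finset.sum_congr rfl fun y _ => ?_
  rw [Pi.smul_apply, smul_eq_mul]

lemma isMatrixLift_entry {A : Matrix (Fin n) (Fin n) ℝ}
    {K : Matrix {α : Fin n → ℕ // ∑ i, α i = m} {α : Fin n → ℕ // ∑ i, α i = m} ℝ}
    (h : IsMatrixLift n m A K) (β : {α : Fin n → ℕ // ∑ i, α i = m})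
    {c : (Fin n → ℝ) →₀ ℝ} (hc : (c.sum fun y a => a • mLift n m y) = Pi.single β 1)
    (α : {α : Fin n → ℕ // ∑ i, α i = m}) :
    K α β = c.sum fun y a => a * mLift n m (A.mulVec y) α := by
  rw [matrix_entry_rep K β hc α]
  exact Finsupp.sum_congr fun y _ => by rw [← h y]

lemma isMatrixLift_unique {A : Matrix (Fin n) (Fin n) ℝ} {K₁ K₂}
    (h₁ : IsMatrixLift n m A K₁) (h₂ : IsMatrixLift n m A K₂) : K₁ = K₂ := by
  funext α β
  obtain ⟨c, hc⟩ := exists_mLift_rep n m β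
  rw [isMatrixLift_entry h₁ β hc α, isMatrixLift_entry h₂ β hc α]

/-- A representation of the standard basis vector indexed by `β` as a finite linear
combination of lifted vectors. -/
def liftRep (n m : ℕ) (β : {α : Fin n → ℕ // ∑ i, α i = m}) : (Fin n → ℝ) →₀ ℝ :=
  (exists_mLift_rep n m β).choose

lemma liftRep_spec (n m : ℕ) (β : {α : Fin n → ℕ // ∑ i, α i = m}) :
    ((liftRep n m β).sum fun y a => a • mLift n m y) = Pi.single β 1 :=
  (exists_mLift_rep n m β).choose_spec

/-- The canonical matrix lift. -/
def matLift (n m : ℕ) (A : Matrix (Fin n) (Fin n) ℝ) :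
    Matrix {α : Fin n → ℕ // ∑ i, α i = m} {α : Fin n → ℕ // ∑ i, α i = m} ℝ :=
  Matrix.of fun α β => (liftRep n m β).sum fun y a => a * mLift n m (A.mulVec y) α

lemma matLift_isLift (n m : ℕ) (A : Matrix (Fin n) (Fin n) ℝ) :
    IsMatrixLift n m A (matLift n m A) := by
  obtain ⟨K, hK⟩ := exists_isMatrixLift n m A
  have : matLift n m A = K := by
    funext α β
    rw [show matLift n m A α β
        = (liftRep n m β).sum fun y a => a * mLift n m (A.mulVec y) α from rfl]
    rw [isMatrixLift_entry hK β (liftRep_spec n m β) α]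
  rwa [this]

lemma eq_matLift_of_isLift {A : Matrix (Fin n) (Fin n) ℝ} {K}
    (h : IsMatrixLift n m A K) : K = matLift n m A :=
  isMatrixLift_unique h (matLift_isLift n m A)

/-- A bound constant for the entries of the canonical lift. -/
def liftC (n m : ℕ) (β : {α : Fin n → ℕ // ∑ i, α i = m}) : ℝ :=
  (liftRep n m β).sum fun y a => |a| * euclNorm y ^ m

lemma liftC_nonneg (n m : ℕ) (β : {α : Fin n → ℕ // ∑ i, α i = m}) :
    0 ≤ liftC n m β :=
  Finset.sum_nonneg fun y _ => mul_nonneg (abs_nonneg _)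
    (pow_nonneg (euclNorm_nonneg _) _)

lemma abs_matLift_le (A : Matrix (Fin n) (Fin n) ℝ)
    (α β : {α : Fin n → ℕ // ∑ i, α i = m}) :
    |matLift n m A α β| ≤ liftC n m β * frobN A ^ m := by
  rw [show matLift n m A α β
      = ∑ y ∈ (liftRep n m β).support, liftRep n m β y * mLift n m (A.mulVec y) α from rfl]
  calc |∑ y ∈ (liftRep n m β).support, liftRep n m β y * mLift n m (A.mulVec y) α|
      ≤ ∑ y ∈ (liftRep n m β).support, |liftRep n m β y * mLift n m (A.mulVec y) α| :=
        Finset.abs_sum_le_sum_abs _ _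
    _ ≤ ∑ y ∈ (liftRep n m β).support,
        |liftRep n m β y| * (euclNorm y ^ m * frobN A ^ m) := by
        refine Finset.sum_le_sum fun y _ => ?_
        rw [abs_mul]
        refine mul_le_mul_of_nonneg_left ?_ (abs_nonneg _)
        calc |mLift n m (A.mulVec y) α| ≤ euclNorm (A.mulVec y) ^ m := abs_mLift_le _ _
          _ ≤ (frobN A * euclNorm y) ^ m :=
              pow_le_pow_left₀ (euclNorm_nonneg _) (euclNorm_mulVec_le A y) m
          _ = euclNorm y ^ m * frobN A ^ m := by rw [mul_pow]; ring
    _ = liftC n m β * frobN A ^ m := by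
        rw [show liftC n m β
          = ∑ y ∈ (liftRep n m β).support, |liftRep n m β y| * euclNorm y ^ m from rfl]
        rw [Finset.sum_mul]
        exact Finset.sum_congr rfl fun y _ => by ring

lemma measurable_mLift_entry (α : {α : Fin n → ℕ // ∑ i, α i = m}) :
    Measurable fun x : Fin n → ℝ => mLift n m x α :=
  measurable_const.mul
    (Finset.measurable_prod _ fun i _ => (measurable_pi_apply i).pow_const _)

lemma measurable_mLift : Measurable fun x : Fin n → ℝ => mLift n m x :=
  measurable_pi_lambda _ fun α => measurable_mLift_entry α

lemma measurable_entry (i j : Fin n) :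
    Measurable fun A : Matrix (Fin n) (Fin n) ℝ => A i j :=
  (measurable_pi_apply j).comp (measurable_pi_apply i)

lemma measurable_mulVec (y : Fin n → ℝ) :
    Measurable fun A : Matrix (Fin n) (Fin n) ℝ => A.mulVec y := by
  apply measurable_pi_lambda
  intro i
  show Measurable fun A : Matrix (Fin n) (Fin n) ℝ => ∑ j, A i j * y j
  exact Finset.measurable_sum _ fun j _ => (measurable_entry i j).mul_const _

lemma measurable_matLift_entry (α β : {α : Fin n → ℕ // ∑ i, α i = m}) :
    Measurable fun A : Matrix (Fin n) (Fin n) ℝ => matLift n m A α β := by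
  have : (fun A : Matrix (Fin n) (Fin n) ℝ => matLift n m A α β)
      = fun A => ∑ y ∈ (liftRep n m β).support,
          liftRep n m β y * mLift n m (A.mulVec y) α := rfl
  rw [this]
  exact Finset.measurable_sum _ fun y _ =>
    measurable_const.mul ((measurable_mLift_entry α).comp (measurable_mulVec y))

lemma measurable_euclNorm : Measurable (euclNorm (n := n)) :=
  Real.continuous_sqrt.measurable.comp
    (Finset.measurable_sum _ fun i _ => (measurable_pi_apply i).pow_const 2)

lemma measurable_frobN : Measurable (frobN (n := n)) :=
  Real.continuous_sqrt.measurable.comp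
    (Finset.measurable_sum _ fun i _ => Finset.measurable_sum _ fun j _ =>
      ((measurable_pi_apply j).comp (measurable_pi_apply i)).pow_const 2)

end AuxLift

section AuxProb

open Filter

variable {n : ℕ} {Ω : Type*} [MeasurableSpace Ω]

lemma Measurable.matrixMul {f g : Ω → Matrix (Fin n) (Fin n) ℝ}
    (hf : Measurable f) (hg : Measurable g) : Measurable fun ω => f ω * g ω := by
  refine measurable_pi_iff.mpr fun i => measurable_pi_iff.mpr fun j => ?_
  have h : (fun ω => (f ω * g ω) i j) = fun ω => ∑ l, f ω i l * g ω l j := by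
    funext ω; rw [Matrix.mul_apply]
  rw [h]
  exact Finset.measurable_sum _ fun l _ =>
    ((measurable_entry i l).comp hf).mul ((measurable_entry l j).comp hg)

lemma measurable_prodSeq {F : ℕ → Ω → Matrix (Fin n) (Fin n) ℝ}
    (hF : ∀ k, Measurable (F k)) (k : ℕ) : Measurable (prodSeq F k) := by
  induction k with
  | zero => exact measurable_const
  | succ k ih => exact (hF k).matrixMul ih

lemma prodSeq_congr {Ω' : Type*} {F : ℕ → Ω → Matrix (Fin n) (Fin n) ℝ}
    {G : ℕ → Ω' → Matrix (Fin n) (Fin n) ℝ} {ω : Ω} {ω' : Ω'} (k : ℕ)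
    (h : ∀ j, j < k → F j ω = G j ω') : prodSeq F k ω = prodSeq G k ω' := by
  induction k with
  | zero => rfl
  | succ k ih =>
    show F k ω * prodSeq F k ω = G k ω' * prodSeq G k ω'
    rw [h k (Nat.lt_succ_self k), ih fun j hj => h j (hj.trans (Nat.lt_succ_self k))]

lemma measurable_prodSeq_tuple (k : ℕ) :
    Measurable fun v : ℕ → Matrix (Fin n) (Fin n) ℝ =>
      prodSeq (fun j (_ : Unit) => v j) k () := by
  induction k with
  | zero => exact measurable_const
  | succ k ih => exact Measurable.matrixMul (measurable_pi_apply k) ih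

lemma iIndepFun_congr_ae {F G : ℕ → Ω → Matrix (Fin n) (Fin n) ℝ} {P : Measure Ω}
    (h : iIndepFun F P) (hFG : ∀ k, F k =ᵐ[P] G k) :
    iIndepFun G P := by
  rw [iIndepFun_iff_measure_inter_preimage_eq_mul] at h ⊢
  intro S sets hsets
  have hsets' : ∀ i ∈ S, (G i ⁻¹' sets i : Set Ω) =ᵐ[P] (F i ⁻¹' sets i : Set Ω) := by
    intro i _
    filter_upwards [hFG i] with ω hω
    show (G i ω ∈ sets i) = (F i ω ∈ sets i)
    rw [hω]
  have h1 : P (⋂ i ∈ S, G i ⁻¹' sets i) = P (⋂ i ∈ S, F i ⁻¹' sets i) :=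
    measure_congr (EventuallyEq.countable_bInter S.countable_toSet
      (fun i hi => hsets' i hi))
  rw [h1, h S hsets]
  exact Finset.prod_congr rfl fun i hi => (measure_congr (hsets' i hi)).symm

end AuxProb

/-- If the system `Σ_μ` is stochastically `m`th mean stable, then the
spectral radius of `E[F₀^[m]]` is less than one (no parity or positivity assumption). -/
theorem specRad_lt_one_of_stochMeanStable {Ω : Type*} [MeasurableSpace Ω]
    (P : Measure Ω) [IsProbabilityMeasure P] (n m : ℕ) (hm : 0 < m)
    (F : ℕ → Ω → Matrix (Fin n) (Fin n) ℝ)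
    (hind : iIndepFun F P)
    (hid : ∀ k, IdentDistrib (F k) (F 0) P P)
    (hint : Integrable (fun ω => ‖F 0 ω‖ ^ m) P)
    (L : Ω → Matrix {α : Fin n → ℕ // ∑ i, α i = m} {α : Fin n → ℕ // ∑ i, α i = m} ℝ)
    (hL : ∀ ω, IsMatrixLift n m (F 0 ω) (L ω))
    (hstoch : StochMeanStable P F m) :
    specRad (matExpVal P L) < 1 := by
  classical
  -- measurable modifications of F
  have hAE : ∀ k, AEMeasurable (F k) P := fun k => (hid k).aemeasurable_fst
  set F' : ℕ → Ω → Matrix (Fin n) (Fin n) ℝ := fun k => (hAE k).mk (F k) with hF'def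
  have hFm : ∀ k, Measurable (F' k) := fun k => (hAE k).measurable_mk
  have hFe : ∀ k, F k =ᵐ[P] F' k := fun k => (hAE k).ae_eq_mk
  have hind' : iIndepFun F' P := iIndepFun_congr_ae hind hFe
  have hid' : ∀ k, IdentDistrib (F' k) (F' 0) P P := by
    intro k
    refine ⟨(hFm k).aemeasurable, (hFm 0).aemeasurable, ?_⟩
    rw [← Measure.map_congr (hFe k), ← Measure.map_congr (hFe 0)]
    exact (hid k).map_eq
  set M := matExpVal P L with hM
  have hLeq : ∀ ω, L ω = matLift n m (F 0 ω) := fun ω => eq_matLift_of_isLift (hL ω)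
  have hMentry : ∀ α β, M α β = ∫ ω, matLift n m (F' 0 ω) α β ∂P := by
    intro α β
    show (∫ ω, L ω α β ∂P) = _
    refine integral_congr_ae ?_
    filter_upwards [hFe 0] with ω hω
    rw [hLeq ω, hω]
  -- integrability of frobN (F' k) ^ m
  have hfrobmeas : ∀ k, Measurable fun ω => frobN (F' k ω) ^ m :=
    fun k => (measurable_frobN.comp (hFm k)).pow_const m
  have hfrob0 : Integrable (fun ω => frobN (F' 0 ω) ^ m) P := by
    have h1 : Integrable (fun ω => ‖F' 0 ω‖ ^ m) P :=
      hint.congr ((hFe 0).mono fun ω hω => by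
        show ‖F 0 ω‖ ^ m = ‖F' 0 ω‖ ^ m
        rw [hω])
    refine Integrable.mono' (h1.const_mul (Real.sqrt n ^ m))
      (hfrobmeas 0).aestronglyMeasurable ?_
    filter_upwards with ω
    rw [Real.norm_eq_abs, abs_of_nonneg (pow_nonneg (frobN_nonneg _) m)]
    calc frobN (F' 0 ω) ^ m ≤ (Real.sqrt n * ‖F' 0 ω‖) ^ m :=
          pow_le_pow_left₀ (frobN_nonneg _) (frobN_le_opNorm _) m
      _ = Real.sqrt n ^ m * ‖F' 0 ω‖ ^ m := mul_pow _ _ _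
  have hfrobk : ∀ k, Integrable (fun ω => frobN (F' k ω) ^ m) P := by
    intro k
    have hD : IdentDistrib (fun ω => frobN (F' k ω) ^ m)
        (fun ω => frobN (F' 0 ω) ^ m) P P :=
      (hid' k).comp (measurable_frobN.pow_const m)
    exact hD.integrable_iff.mpr hfrob0
  -- a generic independence principle
  have hindep_gen : ∀ (k : ℕ) (φ : Matrix (Fin n) (Fin n) ℝ → ℝ)
      (ψ : (ℕ → Matrix (Fin n) (Fin n) ℝ) → ℝ), Measurable φ → Measurable ψ →
      IndepFun (fun ω => φ (F' k ω))
        (fun ω => ψ fun j => if j < k then F' j ω else 1) P := by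
    intro k φ ψ hφ hψ
    have hdisj : Disjoint ({k} : Finset ℕ) (Finset.range k) := by
      simp [Finset.disjoint_left]
    have hbase := hind'.indepFun_finset {k} (Finset.range k) hdisj hFm
    set trunc : ((i : (Finset.range k : Finset ℕ)) → Matrix (Fin n) (Fin n) ℝ)
        → ℕ → Matrix (Fin n) (Fin n) ℝ :=
      fun v j => if h : j ∈ Finset.range k then v ⟨j, h⟩ else 1 with htr
    have htrunc_meas : Measurable trunc := by
      apply measurable_pi_lambda
      intro j
      by_cases h : j ∈ Finset.range k
      · show Measurable fun v : (i : (Finset.range k : Finset ℕ))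
            → Matrix (Fin n) (Fin n) ℝ => if h' : j ∈ Finset.range k then v ⟨j, h'⟩ else 1
        simp only [dif_pos h]
        exact measurable_pi_apply _
      · show Measurable fun v : (i : (Finset.range k : Finset ℕ))
            → Matrix (Fin n) (Fin n) ℝ => if h' : j ∈ Finset.range k then v ⟨j, h'⟩ else 1
        simp only [dif_neg h]
        exact measurable_const
    have hcomp := hbase.comp
      (φ := fun v : (i : ({k} : Finset ℕ)) → Matrix (Fin n) (Fin n) ℝ =>
        φ (v ⟨k, Finset.mem_singleton_self k⟩))
      (ψ := fun v => ψ (trunc v))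
      (hφ.comp (measurable_pi_apply _)) (hψ.comp htrunc_meas)
    have heq : (fun ω => ψ (trunc fun i : (Finset.range k : Finset ℕ) => F' i ω))
        = fun ω => ψ fun j => if j < k then F' j ω else 1 := by
      funext ω
      congr 1
      funext j
      by_cases h : j < k
      · rw [htr]
        simp only [dif_pos (Finset.mem_range.mpr h), if_pos h]
      · rw [htr]
        simp only [dif_neg (fun hc => h (Finset.mem_range.mp hc)), if_neg h]
    rw [← heq]
    exact hcomp
  -- independence of frobN-powers from past products
  have hFB : ∀ k : ℕ, IndepFun (fun ω => frobN (F' k ω) ^ m)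
      (fun ω => ∏ j ∈ Finset.range k, frobN (F' j ω) ^ m) P := by
    intro k
    have h := hindep_gen k (fun A => frobN A ^ m)
      (fun v => ∏ j ∈ Finset.range k, frobN (v j) ^ m)
      (measurable_frobN.pow_const m)
      (Finset.measurable_prod _ fun j _ =>
        ((measurable_frobN.comp (measurable_pi_apply j)).pow_const m))
    have heq : (fun ω => ∏ j ∈ Finset.range k,
          frobN ((fun j' => if j' < k then F' j' ω else 1) j) ^ m)
        = fun ω => ∏ j ∈ Finset.range k, frobN (F' j ω) ^ m := by
      funext ω
      refine Finset.prod_congr rfl fun j hj => ?_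
      simp [Finset.mem_range.mp hj]
    rw [← heq]
    exact h
  have hBpint : ∀ k : ℕ,
      Integrable (fun ω => ∏ j ∈ Finset.range k, frobN (F' j ω) ^ m) P := by
    intro k
    induction k with
    | zero => simpa using integrable_const (1 : ℝ)
    | succ k ih =>
      have h := (hFB k).integrable_mul (hfrobk k) ih
      have heq : (fun ω => ∏ j ∈ Finset.range (k + 1), frobN (F' j ω) ^ m)
          = fun ω => frobN (F' k ω) ^ m * ∏ j ∈ Finset.range k, frobN (F' j ω) ^ m := by
        funext ω
        rw [Finset.prod_range_succ, mul_comm]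
      rw [heq]
      exact h
  have hFBint : ∀ k : ℕ, Integrable
      (fun ω => frobN (F' k ω) ^ m * ∏ j ∈ Finset.range k, frobN (F' j ω) ^ m) P :=
    fun k => (hFB k).integrable_mul (hfrobk k) (hBpint k)
  have hBpmeas : ∀ k, Measurable fun ω => ∏ j ∈ Finset.range k, frobN (F' j ω) ^ m :=
    fun k => Finset.measurable_prod _ fun j _ => hfrobmeas j
  have hBpnonneg : ∀ k ω, 0 ≤ ∏ j ∈ Finset.range k, frobN (F' j ω) ^ m :=
    fun k ω => Finset.prod_nonneg fun j _ => pow_nonneg (frobN_nonneg _) m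
  -- the key identity : expected lifted state = (M^k) applied to lifted initial state
  have hxd0 : ∀ (x₀ : Fin n → ℝ) ω, xd F' x₀ 0 ω = x₀ := fun x₀ ω => Matrix.one_mulVec x₀
  have hxdsucc : ∀ (x₀ : Fin n → ℝ) k ω,
      xd F' x₀ (k + 1) ω = (F' k ω).mulVec (xd F' x₀ k ω) := by
    intro x₀ k ω
    show (F' k ω * prodSeq F' k ω).mulVec x₀
        = (F' k ω).mulVec ((prodSeq F' k ω).mulVec x₀)
    exact (Matrix.mulVec_mulVec x₀ (F' k ω) (prodSeq F' k ω)).symm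
  have hxdbd : ∀ (x₀ : Fin n → ℝ) k ω, euclNorm (xd F' x₀ k ω) ^ m
      ≤ (∏ j ∈ Finset.range k, frobN (F' j ω) ^ m) * euclNorm x₀ ^ m := by
    intro x₀ k ω
    induction k with
    | zero => simp [hxd0 x₀ ω]
    | succ k ih =>
      rw [hxdsucc x₀ k ω]
      calc euclNorm ((F' k ω).mulVec (xd F' x₀ k ω)) ^ m
          ≤ (frobN (F' k ω) * euclNorm (xd F' x₀ k ω)) ^ m :=
            pow_le_pow_left₀ (euclNorm_nonneg _) (euclNorm_mulVec_le _ _) m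
        _ = frobN (F' k ω) ^ m * euclNorm (xd F' x₀ k ω) ^ m := mul_pow _ _ _
        _ ≤ frobN (F' k ω) ^ m
            * ((∏ j ∈ Finset.range k, frobN (F' j ω) ^ m) * euclNorm x₀ ^ m) :=
            mul_le_mul_of_nonneg_left ih (pow_nonneg (frobN_nonneg _) m)
        _ = (∏ j ∈ Finset.range (k + 1), frobN (F' j ω) ^ m) * euclNorm x₀ ^ m := by
            rw [Finset.prod_range_succ]; ring
  have hYmeas : ∀ (x₀ : Fin n → ℝ) k α, Measurable fun ω => mLift n m (xd F' x₀ k ω) α :=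
    fun x₀ k α => (measurable_mLift_entry α).comp
      ((measurable_mulVec x₀).comp (measurable_prodSeq hFm k))
  have hNint : ∀ (x₀ : Fin n → ℝ) k, Integrable (fun ω => euclNorm (xd F' x₀ k ω) ^ m) P := by
    intro x₀ k
    refine Integrable.mono' ((hBpint k).mul_const (euclNorm x₀ ^ m))
      (((measurable_euclNorm.comp
        ((measurable_mulVec x₀).comp (measurable_prodSeq hFm k))).pow_const
        m)).aestronglyMeasurable ?_
    filter_upwards with ω
    rw [Real.norm_eq_abs, abs_of_nonneg (pow_nonneg (euclNorm_nonneg _) m)]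
    exact hxdbd x₀ k ω
  have hYint : ∀ (x₀ : Fin n → ℝ) k α, Integrable (fun ω => mLift n m (xd F' x₀ k ω) α) P := by
    intro x₀ k α
    refine Integrable.mono' ((hBpint k).mul_const (euclNorm x₀ ^ m))
      (hYmeas x₀ k α).aestronglyMeasurable ?_
    filter_upwards with ω
    rw [Real.norm_eq_abs]
    exact (abs_mLift_le _ _).trans (hxdbd x₀ k ω)
  have key : ∀ (x₀ : Fin n → ℝ) (k : ℕ),
      (fun α => ∫ ω, mLift n m (xd F' x₀ k ω) α ∂P) = (M ^ k).mulVec (mLift n m x₀) := by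
    intro x₀ k
    induction k with
    | zero =>
      funext α
      have h0 : ∀ ω, mLift n m (xd F' x₀ 0 ω) α = mLift n m x₀ α :=
        fun ω => by rw [hxd0 x₀ ω]
      simp only [h0]
      rw [integral_const]
      simp [pow_zero, Matrix.one_mulVec]
    | succ k ih =>
      funext α
      -- express the (k+1)-st lifted state via the canonical lift of F' k
      have hY1 : ∀ ω, mLift n m (xd F' x₀ (k + 1) ω) α
          = ∑ β, matLift n m (F' k ω) α β * mLift n m (xd F' x₀ k ω) β := by
        intro ω
        rw [hxdsucc x₀ k ω, matLift_isLift n m (F' k ω) (xd F' x₀ k ω)]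
        rfl
      simp only [hY1]
      -- integrability of each summand
      have hGY : ∀ β, Integrable
          (fun ω => matLift n m (F' k ω) α β * mLift n m (xd F' x₀ k ω) β) P := by
        intro β
        refine Integrable.mono'
          (((hFBint k).mul_const (euclNorm x₀ ^ m)).const_mul (liftC n m β))
          (((measurable_matLift_entry α β).comp (hFm k)).mul
            (hYmeas x₀ k β)).aestronglyMeasurable ?_
        filter_upwards with ω
        rw [Real.norm_eq_abs, abs_mul]
        calc |matLift n m (F' k ω) α β| * |mLift n m (xd F' x₀ k ω) β|
            ≤ (liftC n m β * frobN (F' k ω) ^ m)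
              * ((∏ j ∈ Finset.range k, frobN (F' j ω) ^ m) * euclNorm x₀ ^ m) := by
              refine mul_le_mul (abs_matLift_le _ _ _)
                ((abs_mLift_le _ _).trans (hxdbd x₀ k ω)) (abs_nonneg _) ?_
              exact mul_nonneg (liftC_nonneg n m β) (pow_nonneg (frobN_nonneg _) m)
          _ = liftC n m β * (frobN (F' k ω) ^ m
              * ∏ j ∈ Finset.range k, frobN (F' j ω) ^ m) * euclNorm x₀ ^ m := by ring
          _ = liftC n m β * ((frobN (F' k ω) ^ m
              * ∏ j ∈ Finset.range k, frobN (F' j ω) ^ m) * euclNorm x₀ ^ m) := by ring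
      rw [integral_finset_sum Finset.univ fun β _ => hGY β]
      -- independence of the two factors
      have hindepGY : ∀ β, IndepFun (fun ω => matLift n m (F' k ω) α β)
          (fun ω => mLift n m (xd F' x₀ k ω) β) P := by
        intro β
        have h := hindep_gen k (fun A => matLift n m A α β)
          (fun v => mLift n m ((prodSeq (fun j (_ : Unit) => v j) k ()).mulVec x₀) β)
          (measurable_matLift_entry α β)
          ((measurable_mLift_entry β).comp
            ((measurable_mulVec x₀).comp (measurable_prodSeq_tuple k)))
        have heq : (fun ω => mLift n m ((prodSeq
              (fun j (_ : Unit) => if j < k then F' j ω else 1) k ()).mulVec x₀) β)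
            = fun ω => mLift n m (xd F' x₀ k ω) β := by
          funext ω
          have hps : prodSeq (fun j (_ : Unit) => if j < k then F' j ω else 1) k ()
              = prodSeq F' k ω := prodSeq_congr k fun j hj => by simp [hj]
          show mLift n m ((prodSeq (fun j (_ : Unit) =>
              if j < k then F' j ω else 1) k ()).mulVec x₀) β
            = mLift n m ((prodSeq F' k ω).mulVec x₀) β
          rw [hps]
        rw [← heq]
        exact h
      have hGint : ∀ β, Integrable (fun ω => matLift n m (F' k ω) α β) P := by
        intro β
        refine Integrable.mono' ((hfrobk k).const_mul (liftC n m β))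
          ((measurable_matLift_entry α β).comp (hFm k)).aestronglyMeasurable ?_
        filter_upwards with ω
        rw [Real.norm_eq_abs]
        exact abs_matLift_le _ _ _
      have hmul : ∀ β, ∫ ω, matLift n m (F' k ω) α β * mLift n m (xd F' x₀ k ω) β ∂P
          = (∫ ω, matLift n m (F' k ω) α β ∂P) * ∫ ω, mLift n m (xd F' x₀ k ω) β ∂P :=
        fun β => (hindepGY β).integral_mul_eq_mul_integral (hGint β).aestronglyMeasurable
          (hYint x₀ k β).aestronglyMeasurable
      have hEG : ∀ β, (∫ ω, matLift n m (F' k ω) α β ∂P) = M α β := by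
        intro β
        have hD : IdentDistrib (fun ω => matLift n m (F' k ω) α β)
            (fun ω => matLift n m (F' 0 ω) α β) P P :=
          (hid' k).comp (measurable_matLift_entry α β)
        rw [hD.integral_eq, hMentry α β]
      have hIH : ∀ β, (∫ ω, mLift n m (xd F' x₀ k ω) β ∂P)
          = ((M ^ k).mulVec (mLift n m x₀)) β :=
        fun β => congrFun ih β
      calc ∑ β, ∫ ω, matLift n m (F' k ω) α β * mLift n m (xd F' x₀ k ω) β ∂P
          = ∑ β, M α β * ((M ^ k).mulVec (mLift n m x₀)) β := by
            refine Finset.sum_congr rfl fun β _ => ?_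
            rw [hmul β, hEG β, hIH β]
        _ = ((M ^ (k + 1)).mulVec (mLift n m x₀)) α := by
            rw [pow_succ', ← Matrix.mulVec_mulVec]
            rfl
  -- decay of (M^k) on lifted vectors
  have hdecay : ∀ (x₀ : Fin n → ℝ) α,
      Filter.Tendsto (fun k => ((M ^ k).mulVec (mLift n m x₀)) α)
        Filter.atTop (nhds 0) := by
    intro x₀ α
    have hcong : ∀ k, (∫ ω, euclNorm (xd F' x₀ k ω) ^ m ∂P)
        = ∫ ω, euclNorm (xd F x₀ k ω) ^ m ∂P := by
      intro k
      refine integral_congr_ae ?_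
      have hae : ∀ᵐ ω ∂P, ∀ j, F j ω = F' j ω := (MeasureTheory.ae_all_iff).mpr hFe
      filter_upwards [hae] with ω hω
      have : xd F' x₀ k ω = xd F x₀ k ω := by
        show (prodSeq F' k ω).mulVec x₀ = (prodSeq F k ω).mulVec x₀
        rw [prodSeq_congr k fun j _ => (hω j).symm]
      rw [this]
    have hu : Filter.Tendsto (fun k => ∫ ω, euclNorm (xd F' x₀ k ω) ^ m ∂P)
        Filter.atTop (nhds 0) := by
      have hsum : Summable fun k => ∫ ω, euclNorm (xd F' x₀ k ω) ^ m ∂P := by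
        have := hstoch x₀
        refine this.congr fun k => ?_
        rw [hcong k]
      exact hsum.tendsto_atTop_zero
    have hbd : ∀ k, |((M ^ k).mulVec (mLift n m x₀)) α|
        ≤ ∫ ω, euclNorm (xd F' x₀ k ω) ^ m ∂P := by
      intro k
      have h1 : ((M ^ k).mulVec (mLift n m x₀)) α = ∫ ω, mLift n m (xd F' x₀ k ω) α ∂P :=
        (congrFun (key x₀ k) α).symm
      rw [h1]
      calc |∫ ω, mLift n m (xd F' x₀ k ω) α ∂P| ≤ ∫ ω, |mLift n m (xd F' x₀ k ω) α| ∂P := by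
            simpa [Real.norm_eq_abs] using
              norm_integral_le_integral_norm (fun ω => mLift n m (xd F' x₀ k ω) α) (μ := P)
        _ ≤ ∫ ω, euclNorm (xd F' x₀ k ω) ^ m ∂P := by
            refine integral_mono ((hYint x₀ k α).abs) (hNint x₀ k) fun ω => ?_
            exact abs_mLift_le _ _
    refine tendsto_of_tendsto_of_tendsto_of_le_of_le (g := fun k =>
      -(∫ ω, euclNorm (xd F' x₀ k ω) ^ m ∂P)) (h := fun k =>
      ∫ ω, euclNorm (xd F' x₀ k ω) ^ m ∂P) ?_ hu ?_ ?_
    · simpa using hu.neg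
    · intro k
      exact neg_le_of_abs_le (hbd k)
    · intro k
      exact le_of_abs_le (hbd k)
  -- entrywise decay of M^k
  have hMk : ∀ α β, Filter.Tendsto (fun k => (M ^ k) α β) Filter.atTop (nhds 0) := by
    intro α β
    have h1 : ∀ k, (M ^ k) α β = ∑ y ∈ (liftRep n m β).support,
        liftRep n m β y * ((M ^ k).mulVec (mLift n m y)) α := by
      intro k
      rw [matrix_entry_rep (M ^ k) β (liftRep_spec n m β) α]
      rfl
    simp only [h1]
    have h2 := tendsto_finset_sum (f := fun y k => liftRep n m β y
        * ((M ^ k).mulVec (mLift n m y)) α) ((liftRep n m β).support)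
      (fun y _ => (hdecay y α).const_mul (liftRep n m β y))
    simpa using h2
  -- spectral conclusion
  have hMcpow : ∀ k : ℕ, (M.map (algebraMap ℝ ℂ)) ^ k = (M ^ k).map (algebraMap ℝ ℂ) := by
    intro k
    have h := map_pow ((algebraMap ℝ ℂ).mapMatrix
      (m := {α : Fin n → ℕ // ∑ i, α i = m})) M k
    rw [RingHom.mapMatrix_apply, RingHom.mapMatrix_apply] at h
    exact h.symm
  have hspec : ∀ μ ∈ spectrum ℂ (M.map (algebraMap ℝ ℂ)), ‖μ‖ < 1 := by
    intro μ hμ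
    have hμ' : Module.End.HasEigenvalue
        (Matrix.toLinAlgEquiv' (M.map (algebraMap ℝ ℂ))) μ := by
      rw [Module.End.hasEigenvalue_iff_mem_spectrum]
      rwa [AlgEquiv.spectrum_eq Matrix.toLinAlgEquiv' (M.map (algebraMap ℝ ℂ))]
    obtain ⟨v, hv⟩ := hμ'.exists_hasEigenvector
    have hvne := hv.right
    have heig : (M.map (algebraMap ℝ ℂ)).mulVec v = μ • v := by
      have := Module.End.mem_eigenspace_iff.mp hv.left
      rwa [Matrix.toLinAlgEquiv'_apply] at this
    obtain ⟨i, hvi⟩ : ∃ i, v i ≠ 0 := by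
      by_contra hc
      push_neg at hc
      exact hvne (funext hc)
    have happ : ∀ k : ℕ, ((M.map (algebraMap ℝ ℂ)) ^ k).mulVec v = μ ^ k • v := by
      intro k
      induction k with
      | zero => simp [Matrix.one_mulVec]
      | succ k ih =>
        rw [pow_succ', ← Matrix.mulVec_mulVec, ih, Matrix.mulVec_smul, heig,
          smul_smul, ← pow_succ]
    have hterm : Filter.Tendsto (fun k => (((M.map (algebraMap ℝ ℂ)) ^ k).mulVec v) i)
        Filter.atTop (nhds 0) := by
      have h3 : ∀ k, (((M.map (algebraMap ℝ ℂ)) ^ k).mulVec v) i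
          = ∑ β, ((M ^ k) i β : ℂ) * v β := by
        intro k
        rw [hMcpow k]
        rfl
      simp only [h3]
      have h4 := tendsto_finset_sum (f := fun (β : {α : Fin n → ℕ // ∑ i, α i = m}) k
          => ((M ^ k) i β : ℂ) * v β) Finset.univ
        (fun β _ => by
          have h5 : Filter.Tendsto (fun k => ((M ^ k) i β : ℂ)) Filter.atTop
              (nhds ((0 : ℝ) : ℂ)) :=
            (Complex.continuous_ofReal.tendsto 0).comp (hMk i β)
          simpa using h5.mul_const (v β))
      simpa using h4
    have h6 : Filter.Tendsto (fun k => μ ^ k * v i) Filter.atTop (nhds 0) := by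
      have h7 : ∀ k, (((M.map (algebraMap ℝ ℂ)) ^ k).mulVec v) i = μ ^ k * v i := by
        intro k
        rw [happ k]
        rfl
      rwa [funext h7] at hterm
    have h8 : Filter.Tendsto (fun k => μ ^ k) Filter.atTop (nhds 0) := by
      have h9 := h6.mul_const (v i)⁻¹
      simp only [zero_mul] at h9
      have h10 : ∀ k, μ ^ k * v i * (v i)⁻¹ = μ ^ k := fun k => by
        field_simp
      rwa [funext h10] at h9
    by_contra hge
    push_neg at hge
    have h11 : ∀ k : ℕ, (1 : ℝ) ≤ ‖μ ^ k‖ := fun k => by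
      rw [norm_pow]
      exact one_le_pow₀ hge
    have h8n := h8.norm
    rw [norm_zero] at h8n
    have h12 : (1 : ℝ) ≤ 0 := ge_of_tendsto h8n (Filter.Eventually.of_forall h11)
    linarith
  show spectralRadius ℂ (M.map (algebraMap ℝ ℂ)) < 1
  have hfin : (spectrum ℂ (M.map (algebraMap ℝ ℂ))).Finite :=
    Matrix.finite_spectrum _
  have hle : spectralRadius ℂ (M.map (algebraMap ℝ ℂ))
      ≤ ((hfin.toFinset.sup fun μ => ‖μ‖₊ : NNReal) : ENNReal) := by
    refine iSup₂_le fun μ hμ => ?_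
    exact ENNReal.coe_le_coe.mpr (Finset.le_sup (hfin.mem_toFinset.mpr hμ))
  have hc1 : (hfin.toFinset.sup fun μ => ‖μ‖₊ : NNReal) < 1 := by
    rw [Finset.sup_lt_iff (show (⊥ : NNReal) < 1 by norm_num)]
    intro μ hμ
    have h13 := hspec μ (hfin.mem_toFinset.mp hμ)
    rw [← coe_nnnorm] at h13
    exact_mod_cast h13
  calc spectralRadius ℂ (M.map (algebraMap ℝ ℂ))
      ≤ _ := hle
    _ < 1 := by
      rw [← ENNReal.coe_one]
      exact ENNReal.coe_lt_coe.mpr hc1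

end
end
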